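/- arXiv:2005.13038 — 8 statements merged into one kernel-verified Lean document; each statement's English description precedes it below -/
import Mathlib

section
/- For the d-letter Arnoux–Rauzy substitutions α_i (where α_i fixes i and sends j ↦ ij for j ≠ i), the composition α₁ ∘ α₂ ∘ ⋯ ∘ α_d equals the d-th power of the d-bonacci substitution α̃ defined by α̃(i) = 1(i+1) for 1 ≤ i < d and α̃(d) = 1. -/
/-- Apply a substitution (given by its action on letters) to a word. -/
def subApply {d : ℕ} (σ : Fin d → List (Fin d)) (w : List (Fin d)) : List (Fin d) :=
  w.flatMap σ

/-- Composition of substitutions: `(subComp σ τ)(w) = σ(τ(w))`. -/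
def subComp {d : ℕ} (σ τ : Fin d → List (Fin d)) : Fin d → List (Fin d) :=
  fun j => subApply σ (τ j)

/-- Iterated composition (power) of a substitution. -/
def subPow {d : ℕ} (σ : Fin d → List (Fin d)) : ℕ → Fin d → List (Fin d)
  | 0 => fun j => [j]
  | n + 1 => subComp σ (subPow σ n)

/-- The Arnoux–Rauzy substitution `α_i : i ↦ i, j ↦ ij (j ≠ i)`. -/
def arnouxRauzy {d : ℕ} (i : Fin d) : Fin d → List (Fin d) :=
  fun j => if j = i then [i] else [i, j]

/-- The `d`-bonacci substitution `α̃(i) = 1(i+1)` for `i < d`, `α̃(d) = 1`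
(letters shifted to `0,…,d-1`). -/
def dBonacci (d : ℕ) (hd : 0 < d) : Fin d → List (Fin d) :=
  fun i => if h : (i : ℕ) + 1 < d then [⟨0, hd⟩, ⟨(i : ℕ) + 1, h⟩] else [⟨0, hd⟩]

/- ### Auxiliary material -/

theorem subComp_assoc {d : ℕ} (σ τ ρ : Fin d → List (Fin d)) :
    subComp (subComp σ τ) ρ = subComp σ (subComp τ ρ) := by
  funext j
  simp only [subComp, subApply, List.flatMap_assoc]
  rfl

theorem subComp_one_right {d : ℕ} (σ : Fin d → List (Fin d)) :
    subComp σ (fun j => [j]) = σ := by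
  funext j; simp [subComp, subApply]

theorem subComp_one_left {d : ℕ} (σ : Fin d → List (Fin d)) :
    subComp (fun j => [j]) σ = σ := by
  funext j; simp [subComp, subApply]

theorem subPow_succ' {d : ℕ} (σ : Fin d → List (Fin d)) (n : ℕ) :
    subPow σ (n + 1) = subComp (subPow σ n) σ := by
  induction n with
  | zero =>
    show subComp σ (subPow σ 0) = subComp (subPow σ 0) σ
    simp [subPow, subComp_one_left, subComp_one_right]
  | succ n ih =>
    show subComp σ (subPow σ (n + 1)) = subComp (subComp σ (subPow σ n)) σ
    rw [ih, ← subComp_assoc, show subComp σ (subPow σ n) = subPow σ (n + 1) from rfl, ih]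

/-- A letter permutation viewed as a substitution. -/
def permSub {d : ℕ} (π : Fin d → Fin d) : Fin d → List (Fin d) :=
  fun j => [π j]

theorem permSub_comp {d : ℕ} (π ρ : Fin d → Fin d) :
    subComp (permSub π) (permSub ρ) = permSub (π ∘ ρ) := by
  funext j; simp [subComp, subApply, permSub]

theorem permSub_comp_AR {d : ℕ} (π : Fin d → Fin d) (hπ : Function.Injective π) (i : Fin d) :
    subComp (permSub π) (arnouxRauzy i) = subComp (arnouxRauzy (π i)) (permSub π) := by
  funext j
  by_cases h : j = i
  · subst h; simp [subComp, subApply, permSub, arnouxRauzy]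
  · have h' : π j ≠ π i := fun h' => h (hπ h')
    simp [subComp, subApply, permSub, arnouxRauzy, h, h']

theorem foldr_subComp {d : ℕ} (l : List (Fin d → List (Fin d))) (x : Fin d → List (Fin d)) :
    l.foldr subComp x = subComp (l.foldr subComp (fun j => [j])) x := by
  induction l with
  | nil => simp [subComp_one_left]
  | cons a l ih => simp [List.foldr_cons, ih, subComp_assoc]

theorem dBonacci_eq {d : ℕ} [NeZero d] :
    dBonacci d (Nat.pos_of_ne_zero (NeZero.ne d)) =
      subComp (arnouxRauzy 0) (permSub (fun j => j + 1)) := by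
  have hd : 0 < d := Nat.pos_of_ne_zero (NeZero.ne d)
  funext j
  have hadd : ((j + 1 : Fin d) : ℕ) = ((j : ℕ) + 1 % d) % d := by
    rw [Fin.val_add, Fin.val_one']
  have e0 : (0 : Fin d) = (⟨0, hd⟩ : Fin d) := Fin.ext (by simp)
  simp only [dBonacci, subComp, subApply, permSub, List.flatMap_cons, List.flatMap_nil,
    List.append_nil]
  by_cases h : (j : ℕ) + 1 < d
  · have h1 : (1 : ℕ) % d = 1 := Nat.mod_eq_of_lt (by omega)
    have hval : ((j + 1 : Fin d) : ℕ) = (j : ℕ) + 1 := by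
      rw [hadd, h1, Nat.mod_eq_of_lt h]
    have hne : (j + 1 : Fin d) ≠ 0 := by
      intro hc
      rw [Fin.ext_iff, hval] at hc
      simp at hc
    have e2 : (j + 1 : Fin d) = (⟨(j : ℕ) + 1, h⟩ : Fin d) := Fin.ext hval
    rw [dif_pos h, arnouxRauzy, if_neg hne, e0, e2]
  · have hj : (j : ℕ) + 1 = d := by have := j.2; omega
    have hval : ((j + 1 : Fin d) : ℕ) = 0 := by
      rw [hadd]
      rcases Nat.lt_or_ge 1 d with h2 | h2
      · rw [Nat.mod_eq_of_lt h2, hj, Nat.mod_self]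
      · have : d = 1 := by omega
        subst this
        simp
    have h0 : (j + 1 : Fin d) = 0 := Fin.ext (by simpa using hval)
    rw [dif_neg h, arnouxRauzy, if_pos h0, e0]

open Fin.NatCast

theorem key (d : ℕ) [NeZero d] :
    ∀ n : ℕ, ∀ hn : n ≤ d,
      subPow (dBonacci d (Nat.pos_of_ne_zero (NeZero.ne d))) n =
        subComp
          ((List.ofFn fun k : Fin n => arnouxRauzy (Fin.castLE hn k)).foldr subComp
            (fun j => [j]))
          (permSub (fun j => j + (n : Fin d))) := by
  intro n
  induction n with
  | zero =>
    intro hn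
    funext j
    simp [subPow, subComp, subApply, permSub]
  | succ n ih =>
    intro hn
    have hn' : n ≤ d := by omega
    rw [subPow_succ', ih hn', dBonacci_eq]
    have hinj : Function.Injective (fun j : Fin d => j + (n : Fin d)) :=
      fun a b h => by simpa using add_right_cancel h
    -- rewrite the ofFn over Fin (n+1)
    have hofn : (List.ofFn fun k : Fin (n + 1) => arnouxRauzy (Fin.castLE hn k)) =
        (List.ofFn fun k : Fin n => arnouxRauzy (Fin.castLE hn' k)) ++
          [arnouxRauzy (⟨n, by omega⟩ : Fin d)] := by
      rw [List.ofFn_succ']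
      simp only [List.concat_eq_append]
      congr 1
    rw [hofn, List.foldr_append]
    conv_rhs => rw [List.foldr_cons, List.foldr_nil, subComp_one_right, foldr_subComp]
    rw [subComp_assoc, ← subComp_assoc (permSub _) (arnouxRauzy 0)]
    have h0 : (0 : Fin d) + (n : Fin d) = (⟨n, by omega⟩ : Fin d) := by
      rw [zero_add]
      exact Fin.ext (by simp [Fin.val_natCast, Nat.mod_eq_of_lt (by omega : n < d)])
    rw [permSub_comp_AR _ hinj 0, h0, subComp_assoc (arnouxRauzy _), permSub_comp]
    have hS : ((fun j : Fin d => j + (n : Fin d)) ∘ fun j => j + 1) =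
        fun j : Fin d => j + (((n + 1 : ℕ)) : Fin d) := by
      funext j
      simp [Function.comp, Nat.cast_add, add_assoc, add_comm (1 : Fin d) ((n : ℕ) : Fin d)]
    rw [hS, ← subComp_assoc]

/-- for the `d`-letter Arnoux–Rauzy substitutions, the composition
`α₁ ∘ α₂ ∘ ⋯ ∘ α_d` equals the `d`-th power of the `d`-bonacci substitution. -/
theorem stmt_4 (d : ℕ) (hd : 2 ≤ d) :
    (List.ofFn fun k : Fin d => arnouxRauzy k).foldr subComp (fun j => [j]) =
      subPow (dBonacci d (by omega)) d := by
  haveI : NeZero d := ⟨by omega⟩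
  rw [key d d le_rfl]
  have : ((d : ℕ) : Fin d) = 0 := by simp
  rw [this]
  simp only [add_zero]
  rw [show (permSub (fun j : Fin d => j) : Fin d → List (Fin d)) = fun j => [j] from rfl,
    subComp_one_right]
  congr 1
end

section
/- Let x ∈ ℕ^d be a nonzero vector. Then there exists a word w over the alphabet {1,…,d} with abelianization l(w) = x such that for every prefix p of w, the projection of l(p) along x onto the hyperplane orthogonal to (1,…,1) has norm at most 1 − 1/(2d−2). -/
open Finset

namespace Stmt6

noncomputable def lo (n : ℕ) (α : ℝ) (xi : ℕ) (s : ℤ) : ℤ :=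
  ⌈(((s : ℝ) - 1 + α) * n) / xi⌉

noncomputable def hi (n : ℕ) (α : ℝ) (xi : ℕ) (s : ℤ) : ℤ :=
  ⌊(((s : ℝ) - α) * n) / xi + 1⌋

noncomputable def α (d : ℕ) : ℝ := 1 / (2 * (d:ℝ) - 2)

section Win

variable {d n : ℕ} (x : Fin d → ℕ) (hd : 2 ≤ d) (hn : 1 ≤ n) (hsum : ∑ i, x i = n)
  (a b : ℤ) (hab : a ≤ b)

-- abbreviations
noncomputable def Aa (n : ℕ) (al : ℝ) (a : ℤ) (xi : ℕ) : ℝ := ((a:ℝ)-1) * xi / n + 1 - al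
noncomputable def Bb (n : ℕ) (al : ℝ) (b : ℤ) (xi : ℕ) : ℝ := (b:ℝ) * xi / n + al

lemma lo_cond {xi : ℕ} (hxi : 0 < xi) (hn : 1 ≤ n) {al : ℝ} (s : ℤ) :
    a ≤ lo n al xi s ↔ ⌊Aa n al a xi⌋ < s := by
  have hxi' : (0:ℝ) < xi := by exact_mod_cast hxi
  have hn' : (0:ℝ) < n := by exact_mod_cast hn
  rw [Int.floor_lt, lo, Aa]
  have key : ((a:ℝ) - 1) < (((s : ℝ) - 1 + al) * n) / xi ↔ ((a:ℝ)-1) * xi / n + 1 - al < s := by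
    rw [lt_div_iff₀ hxi']
    constructor
    · intro h
      have h2 : ((a:ℝ)-1) * xi / n < (s:ℝ) - 1 + al := by
        rw [div_lt_iff₀ hn']; nlinarith
      linarith
    · intro h
      have h2 : ((a:ℝ)-1) * xi / n < (s:ℝ) - 1 + al := by linarith
      rw [div_lt_iff₀ hn'] at h2; nlinarith
  constructor
  · intro h
    have := Int.lt_ceil.mp (by omega : (a - 1) < ⌈(((s : ℝ) - 1 + al) * n) / xi⌉)
    push_cast at this
    exact key.mp this
  · intro h
    have := Int.lt_ceil.mpr (by push_cast; exact key.mpr h : ((a - 1 : ℤ) : ℝ) < (((s : ℝ) - 1 + al) * n) / xi)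
    omega

lemma hi_cond {xi : ℕ} (hxi : 0 < xi) (hn : 1 ≤ n) {al : ℝ} (s : ℤ) :
    hi n al xi s ≤ b ↔ s < ⌈Bb n al b xi⌉ := by
  have hxi' : (0:ℝ) < xi := by exact_mod_cast hxi
  have hn' : (0:ℝ) < n := by exact_mod_cast hn
  rw [Int.lt_ceil, hi, Int.floor_le_iff, Bb]
  constructor
  · intro h
    have h1 : ((s:ℝ) - al) * n / xi < b := by push_cast at h; linarith
    rw [div_lt_iff₀ hxi'] at h1
    have h2 : (s:ℝ) - al < (b:ℝ) * xi / n := by rw [lt_div_iff₀ hn']; nlinarith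
    linarith
  · intro h
    have h2 : (s:ℝ) - al < (b:ℝ) * xi / n := by linarith
    rw [lt_div_iff₀ hn'] at h2
    have h1 : ((s:ℝ) - al) * n / xi < b := by rw [div_lt_iff₀ hxi']; nlinarith
    push_cast
    linarith

end Win

section Win2
variable {d n : ℕ}

lemma sum_max_bound (x : Fin d → ℕ) (hd : 2 ≤ d) (hn : 1 ≤ n) (hsum : ∑ i, x i = n)
    (a b : ℤ) (hab : a ≤ b) :
    ∑ i : Fin d, max (⌈Bb n (α d) b (x i)⌉ - ⌊Aa n (α d) a (x i)⌋ - 1) 0 ≤ b - a + 1 := by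
  classical
  set al := α d with hal
  set A : Fin d → ℝ := fun i => Aa n al a (x i) with hA
  set B : Fin d → ℝ := fun i => Bb n al b (x i) with hB
  set N : Fin d → ℤ := fun i => ⌈B i⌉ - ⌊A i⌋ - 1 with hN
  have hd' : (2:ℝ) ≤ d := by exact_mod_cast hd
  have hn' : (0:ℝ) < n := by exact_mod_cast hn
  have hal_pos : 0 < al := by
    rw [hal, α]; exact div_pos one_pos (by linarith)
  have h2d : (2*(d:ℝ) - 2) ≠ 0 := by linarith
  have hal_half : 2 * ((d:ℝ) - 1) * al = 1 := by
    rw [hal, α, mul_one_div, show 2 * ((d:ℝ) - 1) = 2 * (d:ℝ) - 2 by ring]; exact div_self h2d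
  have hdal : (d:ℝ) * al ≤ 1 := by nlinarith
  have hsum' : (∑ i, (x i : ℝ)) = n := by exact_mod_cast congrArg (Nat.cast : ℕ → ℝ) hsum
  have hxnn : ∀ i, (0:ℝ) ≤ (x i : ℝ) / n := fun i => by positivity
  have sumA : ∑ i, A i = ((a:ℝ) - 1) + d * (1 - al) := by
    have e : ∀ i, A i = ((a:ℝ)-1)/n * (x i) + (1 - al) := fun i => by
      simp only [hA, Aa]; ring
    simp only [e]
    rw [Finset.sum_add_distrib, ← Finset.mul_sum, hsum']
    simp only [Finset.sum_const, Finset.card_univ, Fintype.card_fin, nsmul_eq_mul]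
    field_simp
  have sumB : ∑ i, B i = (b:ℝ) + d * al := by
    have e : ∀ i, B i = (b:ℝ)/n * (x i) + al := fun i => by
      simp only [hB, Bb]; ring
    simp only [e]
    rw [Finset.sum_add_distrib, ← Finset.mul_sum, hsum', Finset.sum_const,
      Finset.card_univ, Fintype.card_fin, nsmul_eq_mul]
    field_simp
  have hmax : ∀ i, max (N i) 0 = if 0 ≤ N i then N i else 0 := by
    intro i; by_cases h : 0 ≤ N i
    · rw [if_pos h, max_eq_left h]
    · rw [if_neg h, max_eq_right (by omega : N i ≤ 0)]
  by_cases hP : ∀ i, 0 ≤ N i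
  · -- all intervals contribute nonnegatively
    have e1 : ∑ i : Fin d, max (N i) 0 = (∑ i, ⌈B i⌉) - (∑ i, ⌊A i⌋) - d := by
      have : ∀ i, max (N i) 0 = N i := fun i => max_eq_left (hP i)
      simp only [this]; simp only [hN]
      rw [Finset.sum_sub_distrib, Finset.sum_sub_distrib]
      simp [Finset.card_univ]
    rw [e1]
    have hne : (Finset.univ : Finset (Fin d)).Nonempty := by
      have : 0 < d := by omega
      exact Finset.univ_nonempty_iff.mpr ⟨⟨0, this⟩⟩
    have hZA : ((a:ℝ) - 1 - d * al) < ((∑ i, ⌊A i⌋ : ℤ) : ℝ) := by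
      push_cast
      have : ∑ i, (A i - 1) < ∑ i, ((⌊A i⌋ : ℝ)) :=
        Finset.sum_lt_sum_of_nonempty hne (fun i _ => Int.sub_one_lt_floor (A i))
      have e : ∑ i, (A i - 1) = ((a:ℝ) - 1) + d * (1 - al) - d := by
        rw [Finset.sum_sub_distrib, sumA]; simp [Finset.card_univ]
      rw [e] at this; linarith
    have hZB : ((∑ i, ⌈B i⌉ : ℤ) : ℝ) < (b:ℝ) + d * al + d := by
      push_cast
      have : ∑ i, ((⌈B i⌉ : ℝ)) < ∑ i, (B i + 1) :=
        Finset.sum_lt_sum_of_nonempty hne (fun i _ => Int.ceil_lt_add_one (B i))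
      have e : ∑ i, (B i + 1) = (b:ℝ) + d * al + d := by
        rw [Finset.sum_add_distrib, sumB]; simp [Finset.card_univ]
      rw [e] at this; linarith
    have h1 : (a : ℤ) - 1 ≤ ∑ i, ⌊A i⌋ := by
      by_contra hcon
      push_neg at hcon
      have : ((∑ i, ⌊A i⌋ : ℤ) : ℝ) ≤ (a:ℝ) - 2 := by exact_mod_cast (by omega : (∑ i, ⌊A i⌋ : ℤ) ≤ a - 2)
      linarith
    have h2 : ∑ i, ⌈B i⌉ ≤ b + d := by
      by_contra hcon
      push_neg at hcon
      have : ((b:ℝ) + d + 1) ≤ ((∑ i, ⌈B i⌉ : ℤ) : ℝ) := by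
        exact_mod_cast (by omega : (b + (d:ℤ) + 1) ≤ ∑ i, ⌈B i⌉)
      linarith
    omega
  · -- some interval is empty
    push_neg at hP
    obtain ⟨j, hj⟩ := hP
    set P : Finset (Fin d) := Finset.univ.filter (fun i => 0 ≤ N i) with hPdef
    have eT : ∑ i : Fin d, max (N i) 0 = ∑ i ∈ P, N i := by
      rw [hPdef, Finset.sum_filter]
      exact Finset.sum_congr rfl (fun i _ => hmax i)
    rw [eT]
    rcases Finset.eq_empty_or_nonempty P with hPe | hPne
    · rw [hPe]; simp; omega
    · have hu_lt : P.card < d := by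
        have hss : P ⊂ Finset.univ := by
          rw [Finset.ssubset_univ_iff]
          intro h
          have : j ∈ P := h ▸ Finset.mem_univ j
          rw [hPdef, Finset.mem_filter] at this
          omega
        simpa [Finset.card_univ] using Finset.card_lt_card hss
      set u : ℕ := P.card with hu
      have split : ∑ i ∈ P, N i = (∑ i ∈ P, (⌈B i⌉ - ⌊A i⌋)) - u := by
        simp only [hN]
        rw [Finset.sum_sub_distrib]
        simp [hu]
      rw [split]
      have hWr : ((∑ i ∈ P, (⌈B i⌉ - ⌊A i⌋) : ℤ) : ℝ) < ∑ i ∈ P, (B i - A i + 2) := by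
        push_cast
        exact Finset.sum_lt_sum_of_nonempty hPne (fun i _ => by
          have h1 := Int.ceil_lt_add_one (B i)
          have h2 := Int.sub_one_lt_floor (A i)
          linarith)
      have hBA : ∀ i, B i - A i = ((b:ℝ) - a + 1) * ((x i : ℝ)/n) - 1 + 2 * al := by
        intro i
        simp only [hB, hA, Bb, Aa]
        field_simp
        ring
      have hrho : ∑ i ∈ P, ((x i:ℝ)/n) ≤ 1 := by
        have h1 : ∑ i ∈ P, ((x i:ℝ)/n) ≤ ∑ i : Fin d, ((x i:ℝ)/n) :=
          Finset.sum_le_sum_of_subset_of_nonneg (Finset.subset_univ P) (fun i _ _ => hxnn i)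
        have h2 : ∑ i : Fin d, ((x i:ℝ)/n) = 1 := by
          rw [← Finset.sum_div, hsum']; field_simp
        linarith
      have hLpos : (0:ℝ) ≤ (b:ℝ) - a + 1 := by
        have : (a:ℝ) ≤ b := by exact_mod_cast hab
        linarith
      have hsumBA : ∑ i ∈ P, (B i - A i + 2) ≤ ((b:ℝ) - a + 1) + u * (1 + 2 * al) := by
        calc ∑ i ∈ P, (B i - A i + 2)
            = ∑ i ∈ P, (((b:ℝ)-a+1) * ((x i:ℝ)/n) + (1 + 2*al)) :=
              Finset.sum_congr rfl (fun i _ => by rw [hBA i]; ring)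
          _ = ((b:ℝ) - a + 1) * (∑ i ∈ P, ((x i:ℝ)/n)) + u * (1 + 2*al) := by
              rw [Finset.sum_add_distrib, ← Finset.mul_sum, Finset.sum_const, ← hu, nsmul_eq_mul]
          _ ≤ ((b:ℝ) - a + 1) + u * (1 + 2*al) := by nlinarith
      have hual : (u:ℝ) * (2 * al) ≤ 1 := by
        have h1 : (u:ℝ) ≤ (d:ℝ) - 1 := by
          have : (u:ℕ) ≤ d - 1 := by omega
          have h2 : ((u:ℕ):ℝ) ≤ ((d - 1 : ℕ):ℝ) := by exact_mod_cast this
          rwa [Nat.cast_sub (by omega), Nat.cast_one] at h2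
        nlinarith
      have final : ((∑ i ∈ P, (⌈B i⌉ - ⌊A i⌋) : ℤ) : ℝ) < ((b:ℝ) - a + 1) + u + 1 := by
        have := hWr.trans_le hsumBA
        nlinarith
      have : (∑ i ∈ P, (⌈B i⌉ - ⌊A i⌋) : ℤ) ≤ (b - a + 1) + u := by
        by_contra hcon
        push_neg at hcon
        have : ((b - a + 1 + (u:ℤ) + 1 : ℤ) : ℝ) ≤ ((∑ i ∈ P, (⌈B i⌉ - ⌊A i⌋) : ℤ) : ℝ) := by
          exact_mod_cast (by omega : (b - a + 1 + (u:ℤ) + 1) ≤ ∑ i ∈ P, (⌈B i⌉ - ⌊A i⌋))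
        push_cast at this final
        linarith
      omega

abbrev Item {d : ℕ} (x : Fin d → ℕ) := (i : Fin d) × Fin (x i)

noncomputable def K (n : ℕ) {d : ℕ} (x : Fin d → ℕ) (it : Item x) : Finset ℤ :=
  Finset.Icc (lo n (α d) (x it.1) ((it.2 : ℤ) + 1)) (hi n (α d) (x it.1) ((it.2 : ℤ) + 1))

lemma window (x : Fin d → ℕ) (hd : 2 ≤ d) (hn : 1 ≤ n) (hsum : ∑ i, x i = n)
    (a b : ℤ) (hab : a ≤ b) :
    ((Finset.univ.filter (fun it : Item x =>
        a ≤ lo n (α d) (x it.1) ((it.2 : ℤ) + 1) ∧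
        hi n (α d) (x it.1) ((it.2 : ℤ) + 1) ≤ b)).card : ℤ) ≤ b - a + 1 := by
  classical
  have hdecomp : (Finset.univ.filter (fun it : Item x =>
        a ≤ lo n (α d) (x it.1) ((it.2 : ℤ) + 1) ∧
        hi n (α d) (x it.1) ((it.2 : ℤ) + 1) ≤ b))
      = Finset.univ.sigma (fun i : Fin d => Finset.univ.filter (fun σ : Fin (x i) =>
        a ≤ lo n (α d) (x i) ((σ : ℤ) + 1) ∧ hi n (α d) (x i) ((σ : ℤ) + 1) ≤ b)) := by
    ext ⟨i, σ⟩
    simp [Finset.mem_sigma]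
  rw [hdecomp, Finset.card_sigma]
  push_cast
  refine le_trans (Finset.sum_le_sum (fun i _ => ?_))
    (sum_max_bound x hd hn hsum a b hab)
  -- fiber bound
  have hinj : ((Finset.univ.filter (fun σ : Fin (x i) =>
      a ≤ lo n (α d) (x i) ((σ : ℤ) + 1) ∧ hi n (α d) (x i) ((σ : ℤ) + 1) ≤ b)).card : ℤ)
      ≤ ((Finset.Ioo ⌊Aa n (α d) a (x i)⌋ ⌈Bb n (α d) b (x i)⌉).card : ℤ) := by
    have := Finset.card_le_card_of_injOn
      (f := fun σ : Fin (x i) => (σ : ℤ) + 1)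
      (s := (Finset.univ.filter (fun σ : Fin (x i) =>
        a ≤ lo n (α d) (x i) ((σ : ℤ) + 1) ∧ hi n (α d) (x i) ((σ : ℤ) + 1) ≤ b)))
      (t := Finset.Ioo ⌊Aa n (α d) a (x i)⌋ ⌈Bb n (α d) b (x i)⌉)
      (fun σ hσ => by
        rw [Finset.mem_coe, Finset.mem_filter] at hσ
        obtain ⟨-, h1, h2⟩ := hσ
        have hxi : 0 < x i := σ.pos
        rw [Finset.mem_coe, Finset.mem_Ioo]
        exact ⟨(lo_cond a hxi hn _).mp h1, (hi_cond b hxi hn _).mp h2⟩)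
      (fun σ _ τ _ h => by
        have h' : (σ : ℤ) + 1 = (τ : ℤ) + 1 := h
        have : (σ : ℤ) = τ := by omega
        exact Fin.ext (by exact_mod_cast this))
    exact_mod_cast this
  refine hinj.trans ?_
  rw [Int.card_Ioo]
  rw [Int.toNat_eq_max]
end Win2

section Hall
variable {d n : ℕ}

lemma K_facts (x : Fin d → ℕ) (hd : 2 ≤ d) (hn : 1 ≤ n) (hsum : ∑ i, x i = n)
    (it : Item x) :
    lo n (α d) (x it.1) ((it.2 : ℤ) + 1) ≤ hi n (α d) (x it.1) ((it.2 : ℤ) + 1) ∧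
    1 ≤ lo n (α d) (x it.1) ((it.2 : ℤ) + 1) ∧
    hi n (α d) (x it.1) ((it.2 : ℤ) + 1) ≤ n := by
  obtain ⟨i, σ⟩ := it
  have hxi : 0 < x i := σ.pos
  have hxi' : (0:ℝ) < x i := by exact_mod_cast hxi
  have hn' : (0:ℝ) < n := by exact_mod_cast hn
  have hd' : (2:ℝ) ≤ d := by exact_mod_cast hd
  have hal_pos : 0 < α d := by rw [α]; exact div_pos one_pos (by linarith)
  have hal_half : α d ≤ 1/2 := by
    rw [α, div_le_div_iff₀ (by linarith) (by norm_num)]; linarith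
  set s : ℤ := (σ : ℤ) + 1 with hs
  have hs1 : 1 ≤ s := by omega
  have hsxi : s ≤ (x i : ℤ) := by
    have := σ.isLt; omega
  refine ⟨?_, ?_, ?_⟩
  · show lo n (α d) (x i) s ≤ hi n (α d) (x i) s
    rw [lo, hi]
    have key : (((s:ℝ) - 1 + α d) * n) / (x i) + 1 ≤ (((s:ℝ) - α d) * n) / (x i) + 1 := by
      have h2 : (((s:ℝ) - 1 + α d) * n) / (x i) ≤ (((s:ℝ) - α d) * n) / (x i) := by
        gcongr
        linarith
      linarith
    calc ⌈(((s:ℝ) - 1 + α d) * n) / (x i)⌉ ≤ ⌊(((s:ℝ) - 1 + α d) * n) / (x i)⌋ + 1 :=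
          Int.ceil_le_floor_add_one _
      _ = ⌊(((s:ℝ) - 1 + α d) * n) / (x i) + 1⌋ := by rw [Int.floor_add_one]
      _ ≤ ⌊(((s:ℝ) - α d) * n) / (x i) + 1⌋ := Int.floor_le_floor key
  · show 1 ≤ lo n (α d) (x i) s
    rw [lo]
    have hpos : (0:ℝ) < (((s:ℝ) - 1 + α d) * n) / (x i) := by
      apply div_pos _ hxi'
      apply mul_pos _ hn'
      have : (1:ℝ) ≤ (s:ℝ) := by exact_mod_cast hs1
      linarith
    have h0 : (0:ℤ) < ⌈(((s:ℝ) - 1 + α d) * n) / (x i)⌉ := Int.ceil_pos.mpr hpos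
    omega
  · show hi n (α d) (x i) s ≤ (n:ℤ)
    rw [hi, Int.floor_le_iff]
    have hsr : (s:ℝ) ≤ (x i : ℝ) := by exact_mod_cast hsxi
    have hfr : (((s:ℝ) - α d) * n) / (x i) < n := by
      rw [div_lt_iff₀ hxi']
      nlinarith
    push_cast
    linarith

lemma hall_condition (x : Fin d → ℕ) (hd : 2 ≤ d) (hn : 1 ≤ n) (hsum : ∑ i, x i = n)
    (A : Finset (Item x)) : A.card ≤ (A.biUnion (K n x)).card := by
  classical
  set U := A.biUnion (K n x) with hU
  set lo' : Item x → ℤ := fun it => lo n (α d) (x it.1) ((it.2 : ℤ) + 1) with hlo'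
  set hi' : Item x → ℤ := fun it => hi n (α d) (x it.1) ((it.2 : ℤ) + 1) with hhi'
  have hKlh : ∀ it, lo' it ≤ hi' it := fun it => (K_facts x hd hn hsum it).1
  have hKlo1 : ∀ it, 1 ≤ lo' it := fun it => (K_facts x hd hn hsum it).2.1
  have hKhin : ∀ it, hi' it ≤ (n:ℤ) := fun it => (K_facts x hd hn hsum it).2.2
  have hKU : ∀ it ∈ A, Finset.Icc (lo' it) (hi' it) ⊆ U := by
    intro it hit z hz
    exact Finset.mem_biUnion.mpr ⟨it, hit, hz⟩
  have hU1n : ∀ z ∈ U, 1 ≤ z ∧ z ≤ (n:ℤ) := by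
    intro z hz
    obtain ⟨it, -, hzit⟩ := Finset.mem_biUnion.mp hz
    rw [K, Finset.mem_Icc] at hzit
    exact ⟨le_trans (hKlo1 it) hzit.1, le_trans hzit.2 (hKhin it)⟩
  set M : Item x → ℕ := fun it =>
    Nat.findGreatest (fun m => Finset.Icc (lo' it - (m:ℤ)) (lo' it) ⊆ U) n with hM
  set θ : Item x → ℤ := fun it => lo' it - M it with hθ
  set G : ℤ → ℕ := fun a => Nat.findGreatest (fun m => Finset.Icc a (a + (m:ℤ)) ⊆ U) n with hG
  set R : ℤ → ℤ := fun a => a + (G a : ℤ) with hR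
  have hMeq : ∀ it, Nat.findGreatest (fun m => Finset.Icc (lo' it - (m:ℤ)) (lo' it) ⊆ U) n
      = M it := fun it => rfl
  have hGeq : ∀ a, Nat.findGreatest (fun m => Finset.Icc a (a + (m:ℤ)) ⊆ U) n = G a :=
    fun a => rfl
  have hθeq : ∀ it, θ it = lo' it - (M it : ℤ) := fun it => rfl
  have hReq : ∀ a, R a = a + (G a : ℤ) := fun a => rfl
  have hθ_le : ∀ it, θ it ≤ lo' it := by
    intro it
    have h1 := hθeq it
    omega
  have hθ_spec : ∀ it ∈ A, Finset.Icc (θ it) (lo' it) ⊆ U := by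
    intro it hit
    rcases eq_or_ne (M it) 0 with h | h
    · intro z hz
      rw [Finset.mem_Icc] at hz
      have h1 := hθeq it
      exact hKU it hit (by rw [Finset.mem_Icc]; exact ⟨by omega, le_trans (by omega) (hKlh it)⟩)
    · have := Nat.findGreatest_of_ne_zero (hMeq it) h
      intro z hz
      apply this
      rw [Finset.mem_Icc] at hz ⊢
      have h1 := hθeq it
      omega
  have hθ_mem : ∀ it ∈ A, θ it ∈ U := by
    intro it hit
    exact hθ_spec it hit (by rw [Finset.mem_Icc]; exact ⟨le_refl _, hθ_le it⟩)
  have hθ_out : ∀ it ∈ A, θ it - 1 ∉ U := by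
    intro it hit hmem
    have h1 := hθeq it
    have hMlt : M it < n := by
      by_contra hcon
      push_neg at hcon
      have hMn : M it = n := le_antisymm (hMeq it ▸ Nat.findGreatest_le n) hcon
      have hz : lo' it - (n:ℤ) ∈ U := hθ_spec it hit (by rw [Finset.mem_Icc]; omega)
      have h2 := (hU1n _ hz).1
      have h3 := hKhin it
      have h4 := hKlh it
      omega
    have hnot : ¬ (Finset.Icc (lo' it - ((M it + 1 : ℕ):ℤ)) (lo' it) ⊆ U) :=
      Nat.findGreatest_is_greatest (P := fun m => Finset.Icc (lo' it - (m:ℤ)) (lo' it) ⊆ U)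
        (k := M it + 1) (by rw [hMeq it]; omega) (by omega)
    apply hnot
    intro z hz
    rw [Finset.mem_Icc] at hz
    push_cast at hz
    rcases eq_or_ne z (θ it - 1) with rfl | hne
    · exact hmem
    · exact hθ_spec it hit (by rw [Finset.mem_Icc]; omega)
  have hR_ge : ∀ a, a ≤ R a := by
    intro a
    have h1 := hReq a
    omega
  have hG_spec : ∀ it ∈ A, Finset.Icc (θ it) (R (θ it)) ⊆ U := by
    intro it hit
    have h1 := hReq (θ it)
    rcases eq_or_ne (G (θ it)) 0 with h | h
    · intro z hz
      rw [Finset.mem_Icc] at hz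
      have : z = θ it := by omega
      rw [this]
      exact hθ_mem it hit
    · have h2 := Nat.findGreatest_of_ne_zero (hGeq (θ it)) h
      intro z hz
      apply h2
      rw [Finset.mem_Icc] at hz ⊢
      omega
  have hR_out : ∀ it ∈ A, R (θ it) + 1 ∉ U := by
    intro it hit hmem
    have ha1 : 1 ≤ θ it := (hU1n _ (hθ_mem it hit)).1
    have h1 := hReq (θ it)
    have hGlt : G (θ it) < n := by
      by_contra hcon
      push_neg at hcon
      have hGn : G (θ it) = n := le_antisymm (hGeq (θ it) ▸ Nat.findGreatest_le n) hcon
      have hz : θ it + (n:ℤ) ∈ U := hG_spec it hit (by rw [Finset.mem_Icc]; omega)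
      have h2 := (hU1n _ hz).2
      omega
    have hnot : ¬ (Finset.Icc (θ it) (θ it + ((G (θ it) + 1 : ℕ):ℤ)) ⊆ U) :=
      Nat.findGreatest_is_greatest (P := fun m => Finset.Icc (θ it) (θ it + (m:ℤ)) ⊆ U)
        (k := G (θ it) + 1) (by rw [hGeq (θ it)]; omega) (by omega)
    apply hnot
    intro z hz
    rw [Finset.mem_Icc] at hz
    push_cast at hz
    rcases eq_or_ne z (R (θ it) + 1) with rfl | hne
    · exact hmem
    · exact hG_spec it hit (by rw [Finset.mem_Icc]; omega)
  have h_in_run : ∀ it ∈ A, θ it ≤ lo' it ∧ hi' it ≤ R (θ it) := by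
    intro it hit
    refine ⟨hθ_le it, ?_⟩
    by_contra hcon
    push_neg at hcon
    have hmem : R (θ it) + 1 ∈ U := by
      rcases le_or_gt (R (θ it) + 1) (lo' it) with h | h
      · exact hθ_spec it hit (by rw [Finset.mem_Icc]; exact ⟨by linarith [hR_ge (θ it)], h⟩)
      · exact hKU it hit (by rw [Finset.mem_Icc]; omega)
    exact hR_out it hit hmem
  calc A.card = ∑ a ∈ A.image θ, (A.filter (fun it => θ it = a)).card :=
        Finset.card_eq_sum_card_image θ A
    _ ≤ ∑ a ∈ A.image θ, (Finset.Icc a (R a)).card := by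
        apply Finset.sum_le_sum
        intro a ha
        have hsub : A.filter (fun it => θ it = a) ⊆
            Finset.univ.filter (fun it : Item x => a ≤ lo' it ∧ hi' it ≤ R a) := by
          intro it hitf
          rw [Finset.mem_filter] at hitf ⊢
          obtain ⟨hitA, hθa⟩ := hitf
          have := h_in_run it hitA
          rw [hθa] at this
          exact ⟨Finset.mem_univ _, this⟩
        have hcard := Finset.card_le_card hsub
        have hwin := window x hd hn hsum a (R a) (hR_ge a)
        have hle : ((A.filter (fun it => θ it = a)).card : ℤ) ≤ R a - a + 1 :=
          le_trans (by exact_mod_cast hcard) hwin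
        rw [Int.card_Icc]
        omega
    _ = ((A.image θ).biUnion (fun a => Finset.Icc a (R a))).card := by
        symm
        apply Finset.card_biUnion
        intro a ha a' ha' hne
        obtain ⟨it1, hit1A, hit1θ⟩ := Finset.mem_image.mp ha
        obtain ⟨it2, hit2A, hit2θ⟩ := Finset.mem_image.mp ha'
        rw [Function.onFun, Finset.disjoint_left]
        intro z hz1 hz2
        rw [Finset.mem_Icc] at hz1 hz2
        rcases lt_trichotomy a a' with h | h | h
        · apply hθ_out it2 hit2A
          rw [hit2θ]
          apply hG_spec it1 hit1A
          rw [Finset.mem_Icc, hit1θ]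
          omega
        · exact hne h
        · apply hθ_out it1 hit1A
          rw [hit1θ]
          apply hG_spec it2 hit2A
          rw [Finset.mem_Icc, hit2θ]
          omega
    _ ≤ U.card := by
        apply Finset.card_le_card
        intro z hz
        obtain ⟨a, ha, hza⟩ := Finset.mem_biUnion.mp hz
        obtain ⟨it1, hit1A, hit1θ⟩ := Finset.mem_image.mp ha
        apply hG_spec it1 hit1A
        rwa [hit1θ]

end Hall

section Build
variable {d n : ℕ}

lemma sum_count_list {d : ℕ} (l : List (Fin d)) : ∑ i, l.count i = l.length := by
  classical
  have := Multiset.sum_count_eq_card (s := (Finset.univ : Finset (Fin d)))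
    (m := (l : Multiset (Fin d))) (fun a _ => Finset.mem_univ a)
  simpa using this

lemma count_map_range {d : ℕ} (g : ℕ → Fin d) (c : Fin d) (m : ℕ) :
    ((List.range m).map g).count c = ((Finset.range m).filter (fun j => g j = c)).card := by
  induction m with
  | zero => simp
  | succ m ih =>
    rw [List.range_succ, List.map_append, List.count_append, Finset.range_add_one,
      Finset.filter_insert]
    by_cases h : g m = c
    · rw [if_pos h, Finset.card_insert_of_notMem (by simp)]
      simp [List.count_cons, h, ih]
    · rw [if_neg h]
      simp [List.count_cons, h, ih]

/-- The main construction for `d ≥ 2`. -/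
lemma exists_word (x : Fin d → ℕ) (hd : 2 ≤ d) (hn : 1 ≤ n) (hsum : ∑ i, x i = n) :
    ∃ w : List (Fin d), w.length = n ∧ (∀ i, w.count i = x i) ∧
      ∀ k, k ≤ n → ∀ i : Fin d,
        ((w.take k).count i : ℝ) ≤ (k:ℝ) * (x i) / n + 1 - α d ∧
        (k:ℝ) * (x i) / n - (1 - α d) ≤ ((w.take k).count i : ℝ) := by
  classical
  have hn' : (0:ℝ) < n := by exact_mod_cast hn
  have hd' : (2:ℝ) ≤ d := by exact_mod_cast hd
  have hal_pos : 0 < α d := by rw [α]; exact div_pos one_pos (by linarith)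
  have hal_half : α d ≤ 1/2 := by
    rw [α, div_le_div_iff₀ (by linarith) (by norm_num)]; linarith
  obtain ⟨f, hfinj, hfmem⟩ :=
    (Finset.all_card_le_biUnion_card_iff_exists_injective (K n x)).mp
      (fun A => hall_condition x hd hn hsum A)
  have hflo : ∀ it : Item x, lo n (α d) (x it.1) ((it.2 : ℤ) + 1) ≤ f it :=
    fun it => (Finset.mem_Icc.mp (hfmem it)).1
  have hfhi : ∀ it : Item x, f it ≤ hi n (α d) (x it.1) ((it.2 : ℤ) + 1) :=
    fun it => (Finset.mem_Icc.mp (hfmem it)).2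
  have hf1 : ∀ it : Item x, 1 ≤ f it :=
    fun it => le_trans (K_facts x hd hn hsum it).2.1 (hflo it)
  have hfn : ∀ it : Item x, f it ≤ (n:ℤ) :=
    fun it => le_trans (hfhi it) (K_facts x hd hn hsum it).2.2
  have hcard : Fintype.card (Item x) = n := by
    rw [Fintype.card_sigma]
    simpa using hsum
  set f' : Item x → Fin n := fun it => ⟨(f it - 1).toNat, by
    have h1 := hf1 it; have h2 := hfn it; omega⟩ with hf'
  have hf'inj : Function.Injective f' := by
    intro it1 it2 h
    apply hfinj
    have h1 := hf1 it1; have h2 := hf1 it2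
    have h3 : ((f' it1 : Fin n) : ℕ) = ((f' it2 : Fin n) : ℕ) := by rw [h]
    simp only [hf'] at h3
    omega
  have hbij : Function.Bijective f' :=
    (Fintype.bijective_iff_injective_and_card f').mpr ⟨hf'inj, by rw [hcard, Fintype.card_fin]⟩
  set e := Equiv.ofBijective f' hbij with he
  have he_app : ∀ it, ((e it : Fin n) : ℕ) = (f it - 1).toNat := fun it => rfl
  set g : ℕ → Fin d := fun j => if h : j < n then (e.symm ⟨j, h⟩).1 else ⟨0, by omega⟩ with hg
  have key : ∀ k, k ≤ n → ∀ i : Fin d,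
      (((List.range n).map g).take k).count i
        = (Finset.univ.filter (fun σ : Fin (x i) => f ⟨i, σ⟩ ≤ (k:ℤ))).card := by
    intro k hk i
    rw [← List.map_take, List.take_range, min_eq_left hk, count_map_range]
    have step1 : ((Finset.range k).filter (fun j => g j = i)).card
        = (Finset.univ.filter (fun it : Item x => it.1 = i ∧ f it ≤ (k:ℤ))).card := by
      apply Finset.card_bij' (i := fun j hj => (e.symm ⟨j, by
          have := (Finset.mem_filter.mp hj).1
          rw [Finset.mem_range] at this
          omega⟩ : Item x))
        (j := fun it _ => ((e it : Fin n) : ℕ))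
      case hi =>
        intro j hj
        rw [Finset.mem_filter] at hj ⊢
        obtain ⟨hjr, hgj⟩ := hj
        rw [Finset.mem_range] at hjr
        have hjn : j < n := by omega
        refine ⟨Finset.mem_univ _, ?_, ?_⟩
        · have hh : g j = (e.symm ⟨j, hjn⟩).1 := by
            simp only [hg]
            rw [dif_pos hjn]
          rw [← hh]
          exact hgj
        · set it := (e.symm ⟨j, hjn⟩ : Item x) with hit
          have heq : e it = ⟨j, hjn⟩ := Equiv.apply_symm_apply e _
          have hv : ((e it : Fin n) : ℕ) = j := by rw [heq]
          rw [he_app] at hv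
          have h1 := hf1 it
          omega
      case hj =>
        intro it hit
        rw [Finset.mem_filter] at hit ⊢
        obtain ⟨-, hit1, hitk⟩ := hit
        have h1 := hf1 it
        have hv := he_app it
        have hvn : ((e it : Fin n) : ℕ) < n := (e it).isLt
        constructor
        · rw [Finset.mem_range]; omega
        · show g ((e it : Fin n) : ℕ) = i
          have hh : g ((e it : Fin n) : ℕ) = (e.symm ⟨((e it : Fin n) : ℕ), hvn⟩).1 := by
            simp only [hg]
            rw [dif_pos hvn]
          rw [hh]
          have h5 : (⟨((e it : Fin n) : ℕ), hvn⟩ : Fin n) = e it := by apply Fin.ext; rfl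
          rw [h5, Equiv.symm_apply_apply]
          exact hit1
      case left_inv =>
        intro j hj
        have hjr := (Finset.mem_filter.mp hj).1
        rw [Finset.mem_range] at hjr
        have hjn : j < n := by omega
        show ((e (e.symm ⟨j, hjn⟩) : Fin n) : ℕ) = j
        exact congrArg Fin.val (Equiv.apply_symm_apply e ⟨j, hjn⟩)
      case right_inv =>
        intro it hit
        have hvn : ((e it : Fin n) : ℕ) < n := (e it).isLt
        show e.symm ⟨((e it : Fin n) : ℕ), hvn⟩ = it
        have h5 : (⟨((e it : Fin n) : ℕ), hvn⟩ : Fin n) = e it := by apply Fin.ext; rfl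
        rw [h5, Equiv.symm_apply_apply]
    rw [step1]
    -- step 2 : collapse the sigma type
    have hdec : Finset.univ.filter (fun it : Item x => it.1 = i ∧ f it ≤ (k:ℤ))
        = Finset.univ.sigma (fun i' : Fin d =>
            Finset.univ.filter (fun σ : Fin (x i') => i' = i ∧ f ⟨i', σ⟩ ≤ (k:ℤ))) := by
      ext ⟨i', σ⟩
      simp [Finset.mem_sigma]
    rw [hdec, Finset.card_sigma]
    rw [Finset.sum_eq_single_of_mem i (Finset.mem_univ i)]
    · congr 1
      apply Finset.filter_congr
      intro σ _
      simp
    · intro i' _ hne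
      rw [Finset.card_eq_zero, Finset.eq_empty_iff_forall_notMem]
      intro σ hσ
      rw [Finset.mem_filter] at hσ
      exact hne hσ.2.1
  refine ⟨(List.range n).map g, by simp, ?_, ?_⟩
  · -- total counts
    intro i
    have hlen : ((List.range n).map g).length = n := by simp
    have hw : ((List.range n).map g).take n = (List.range n).map g :=
      List.take_of_length_le (le_of_eq hlen)
    rw [← hw, key n (le_refl n) i]
    rw [Finset.filter_true_of_mem (fun σ _ => hfn ⟨i, σ⟩)]
    simp
  · -- prefix bounds
    intro k hk i
    rw [key k hk i]
    set c := (Finset.univ.filter (fun σ : Fin (x i) => f ⟨i, σ⟩ ≤ (k:ℤ))).card with hc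
    have hk' : (k:ℝ) ≤ n := by exact_mod_cast hk
    have hkx : (0:ℝ) ≤ (k:ℝ) * (x i) / n := by positivity
    constructor
    · -- upper bound
      set t : ℝ := (k:ℝ) * (x i) / n + 1 - α d with ht
      have ht0 : 0 ≤ t := by rw [ht]; linarith
      have hsub : (c:ℤ) ≤ ⌊t⌋ := by
        have hinj := Finset.card_le_card_of_injOn
          (f := fun σ : Fin (x i) => (σ : ℤ) + 1)
          (s := Finset.univ.filter (fun σ : Fin (x i) => f ⟨i, σ⟩ ≤ (k:ℤ)))
          (t := Finset.Icc 1 ⌊t⌋)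
          (fun σ hσ => by
            show (σ:ℤ) + 1 ∈ Finset.Icc 1 ⌊t⌋
            rw [Finset.mem_coe, Finset.mem_filter] at hσ
            have hxi : 0 < x i := σ.pos
            have hxi' : (0:ℝ) < x i := by exact_mod_cast hxi
            have hlok : lo n (α d) (x i) ((σ:ℤ)+1) ≤ k := le_trans (hflo ⟨i, σ⟩) hσ.2
            rw [lo, Int.ceil_le] at hlok
            rw [div_le_iff₀ hxi'] at hlok
            rw [Finset.mem_Icc]
            constructor
            · omega
            · rw [Int.le_floor, ht]
              have : ((σ:ℤ)+1 : ℝ) - 1 + α d ≤ (k:ℝ) * (x i) / n := by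
                rw [le_div_iff₀ hn']
                push_cast at hlok ⊢
                nlinarith
              push_cast at this ⊢
              linarith)
          (fun σ _ τ _ h => by
            have h' : (σ : ℤ) + 1 = (τ : ℤ) + 1 := h
            exact Fin.ext (by omega))
        rw [Int.card_Icc] at hinj
        rw [← hc] at hinj
        have h0 : (0:ℤ) ≤ ⌊t⌋ := Int.floor_nonneg.mpr ht0
        omega
      calc (c:ℝ) ≤ ((⌊t⌋ : ℤ) : ℝ) := by exact_mod_cast hsub
        _ ≤ t := Int.floor_le t
    · -- lower bound
      set t' : ℝ := (k:ℝ) * (x i) / n + α d with ht'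
      have ht'0 : 0 < t' := by rw [ht']; linarith
      set m : ℤ := min ((x i : ℕ) : ℤ) (⌈t'⌉ - 1) with hm
      have hm0 : 0 ≤ m := by
        rw [hm]
        have := Int.ceil_pos.mpr ht'0
        omega
      have hcm : m ≤ (c:ℤ) := by
        rcases Nat.eq_zero_or_pos (x i) with hxi0 | hxi
        · have : m ≤ 0 := by rw [hm]; simp [hxi0]
          omega
        · have hxi' : (0:ℝ) < x i := by exact_mod_cast hxi
          have hinj := Finset.card_le_card_of_injOn
            (f := fun z : ℤ => if h : (z - 1).toNat < x i then (⟨(z-1).toNat, h⟩ : Fin (x i))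
              else ⟨0, hxi⟩)
            (s := Finset.Icc 1 m)
            (t := Finset.univ.filter (fun σ : Fin (x i) => f ⟨i, σ⟩ ≤ (k:ℤ)))
            (fun z hz => by
              beta_reduce
              rw [Finset.mem_coe, Finset.mem_Icc] at hz
              have hzx : (z - 1).toNat < x i := by
                have : m ≤ ((x i : ℕ) : ℤ) := by rw [hm]; exact min_le_left _ _
                omega
              rw [dif_pos hzx, Finset.mem_coe, Finset.mem_filter]
              refine ⟨Finset.mem_univ _, ?_⟩
              have hs : ((⟨(z-1).toNat, hzx⟩ : Fin (x i)) : ℤ) + 1 = z := by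
                push_cast
                omega
              apply le_trans (hfhi ⟨i, ⟨(z-1).toNat, hzx⟩⟩)
              show hi n (α d) (x i) _ ≤ (k:ℤ)
              rw [hs, hi, Int.floor_le_iff]
              have hzt : (z:ℝ) < t' := by
                have h1 : z ≤ ⌈t'⌉ - 1 := by
                  have : m ≤ ⌈t'⌉ - 1 := by rw [hm]; exact min_le_right _ _
                  omega
                have h2 : ((z:ℤ):ℝ) ≤ ((⌈t'⌉ - 1 : ℤ) : ℝ) := by exact_mod_cast h1
                push_cast at h2
                linarith [Int.ceil_lt_add_one t']
              have h3 : ((z:ℝ) - α d) * n < (k:ℝ) * (x i) := by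
                rw [ht'] at hzt
                have h4 : (z:ℝ) - α d < (k:ℝ) * (x i) / n := by linarith
                rw [lt_div_iff₀ hn'] at h4
                nlinarith
              have h6 : ((z:ℝ) - α d) * n / (x i) < (k:ℝ) := by
                rw [div_lt_iff₀ hxi']
                push_cast
                nlinarith
              push_cast
              linarith)
            (fun z hz z' hz' hzz => by
              simp only [Finset.coe_Icc, Set.mem_Icc] at hz hz'
              have hzx : (z - 1).toNat < x i := by
                have : m ≤ ((x i : ℕ) : ℤ) := by rw [hm]; exact min_le_left _ _
                omega
              have hzx' : (z' - 1).toNat < x i := by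
                have : m ≤ ((x i : ℕ) : ℤ) := by rw [hm]; exact min_le_left _ _
                omega
              beta_reduce at hzz
              rw [dif_pos hzx, dif_pos hzx'] at hzz
              have := congrArg Fin.val hzz
              simp only at this
              omega)
          rw [Int.card_Icc] at hinj
          rw [← hc] at hinj
          omega
      have : (m:ℝ) ≤ (c:ℝ) := by exact_mod_cast hcm
      have hmge : min ((x i : ℕ) : ℝ) (t' - 1) ≤ (m:ℝ) := by
        rw [hm]
        push_cast
        apply min_le_min (le_refl _)
        have := Int.ceil_lt_add_one t'
        have h2 := Int.le_ceil t'
        push_cast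
        linarith [Int.le_ceil t']
      have hfin : (k:ℝ) * (x i) / n - (1 - α d) ≤ min ((x i : ℕ) : ℝ) (t' - 1) := by
        apply le_min
        · have : (k:ℝ) * (x i) / n ≤ (x i : ℝ) := by
            rw [div_le_iff₀ hn']
            have hx0 : (0:ℝ) ≤ (x i : ℝ) := by positivity
            nlinarith
          linarith
        · rw [ht']; linarith
      linarith

end Build

end Stmt6

/-- The projection of `ℝ^d` along the vector `u` onto the hyperplane `1^⊥`. -/
noncomputable def projAlong {d : ℕ} (u y : Fin d → ℝ) : Fin d → ℝ :=
  y - ((∑ i, y i) / (∑ i, u i)) • u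

/-- chairman assignment theorem of Meijer/Tijdeman: for every nonzero
`x ∈ ℕ^d` there is a word `w` over `{1,…,d}` with abelianization `x` such that for every
prefix `p` of `w`, the projection of `l(p)` along `x` onto `1^⊥` has (sup) norm at most
`1 − 1/(2d−2)`. -/
theorem stmt_6 {d : ℕ} (x : Fin d → ℕ) (hx : x ≠ 0) :
    ∃ w : List (Fin d), (∀ i, w.count i = x i) ∧
      ∀ p : List (Fin d), p <+: w →
        ‖projAlong (fun i => (x i : ℝ)) (fun i => (p.count i : ℝ))‖ ≤
          1 - 1 / (2 * (d : ℝ) - 2) := by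
  classical
  rcases Nat.lt_or_ge d 2 with hd | hd
  · interval_cases d
    · exact absurd (funext fun i => i.elim0) hx
    · -- d = 1
      have hx0 : x 0 ≠ 0 := by
        intro h
        apply hx
        funext i
        have hi : i = 0 := Subsingleton.elim _ _
        rw [hi, h]; rfl
      have hx0' : ((x 0 : ℕ) : ℝ) ≠ 0 := by exact_mod_cast hx0
      refine ⟨List.replicate (x 0) 0, ?_, ?_⟩
      · intro i
        have hi : i = (0 : Fin 1) := Subsingleton.elim _ _
        rw [hi]
        simp
      · intro p hp
        have hzero : projAlong (fun i => (x i : ℝ)) (fun i => (p.count i : ℝ)) = 0 := by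
          funext i
          have hi : i = (0 : Fin 1) := Subsingleton.elim _ _
          rw [hi]
          show (fun i => (p.count i : ℝ)) 0
            - ((∑ j, (p.count j : ℝ)) / (∑ j, ((x j : ℕ) : ℝ))) * (x 0 : ℝ) = 0
          rw [Fin.sum_univ_one, Fin.sum_univ_one]
          rw [div_mul_cancel₀ _ hx0']
          simp
        rw [hzero]
        have : (2 * ((1:ℕ) : ℝ) - 2) = 0 := by norm_num
        rw [this]
        simp
  · -- main case d ≥ 2
    set n := ∑ i, x i with hn_def
    have hn : 1 ≤ n := by
      by_contra hcon
      push_neg at hcon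
      have hn0 : n = 0 := by omega
      apply hx
      funext i
      have := (Finset.sum_eq_zero_iff.mp (hn_def ▸ hn0 : ∑ i, x i = 0)) i (Finset.mem_univ i)
      simp [this]
    obtain ⟨w, hwlen, hwcount, hbounds⟩ := Stmt6.exists_word x hd hn rfl
    have hn' : (0:ℝ) < n := by
      have : (1:ℝ) ≤ (n:ℝ) := by exact_mod_cast hn
      linarith
    have hd' : (2:ℝ) ≤ (d:ℝ) := by exact_mod_cast hd
    have hal : Stmt6.α d = 1 / (2 * (d:ℝ) - 2) := rfl
    have hal_pos : 0 < Stmt6.α d := by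
      rw [hal]; exact div_pos one_pos (by linarith)
    have hal_half : Stmt6.α d ≤ 1/2 := by
      rw [hal, div_le_div_iff₀ (by linarith) (by norm_num)]; linarith
    refine ⟨w, hwcount, ?_⟩
    intro p hp
    set k := p.length with hk_def
    have hk : k ≤ n := by
      have := hp.length_le
      omega
    have hpw : p = w.take k := by
      rw [hk_def]
      exact List.prefix_iff_eq_take.mp hp
    rw [← hal]
    rw [pi_norm_le_iff_of_nonneg (by linarith)]
    intro i
    have hsum_y : ∑ j, ((p.count j : ℕ) : ℝ) = (k:ℝ) := by
      have := Stmt6.sum_count_list p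
      rw [← hk_def] at this  -- p.length = k
      exact_mod_cast congrArg (Nat.cast : ℕ → ℝ) this
    have hsum_u : ∑ j, ((x j : ℕ) : ℝ) = (n:ℝ) := by
      exact_mod_cast congrArg (Nat.cast : ℕ → ℝ) hn_def.symm
    have hproj : projAlong (fun j => (x j : ℝ)) (fun j => (p.count j : ℝ)) i
        = (p.count i : ℝ) - (k:ℝ) * (x i : ℝ) / (n:ℝ) := by
      show (fun j => (p.count j : ℝ)) i
          - ((∑ j, (p.count j : ℝ)) / (∑ j, ((x j : ℕ) : ℝ))) * (x i : ℝ)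
          = (p.count i : ℝ) - (k:ℝ) * (x i : ℝ) / (n:ℝ)
      rw [hsum_y, hsum_u]
      ring
    rw [Real.norm_eq_abs, hproj]
    obtain ⟨hub, hlb⟩ := hbounds k hk i
    rw [← hpw] at hub hlb
    rw [abs_le]
    constructor
    · linarith
    · linarith
end

section
/- Let ω be an infinite word over a finite alphabet A with |A| = d. Then every non-empty factor w of ω can be written as w = v₁a₁v₂a₂⋯v_ℓa_ℓ with 1 ≤ ℓ ≤ d, where the a_j ∈ A are pairwise distinct letters and each v_j is a (possibly empty) return word of ω to the letter a_j, i.e., there exist p ∈ A* such that both p a_j and p v_j a_j occur as prefixes of appropriate shifted occurrences in ω (formally: v_j belongs to the set Q = {v : p a occurs and p v a occurs as prefixes of ω for some p ∈ A*, a ∈ A}). -/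
/-- `l` is a prefix of the infinite word `ω`. -/
def IsPrefOf {d : ℕ} (ω : ℕ → Fin d) (l : List (Fin d)) : Prop :=
  l = (List.range l.length).map ω

/-- The set `Q` of return-like words of the infinite word `ω`: words `v` such that for some
`p ∈ A*` and letter `a`, both `p a` and `p v a` are prefixes of `ω`. -/
def returnWords {d : ℕ} (ω : ℕ → Fin d) : Set (List (Fin d)) :=
  {v | ∃ (p : List (Fin d)) (a : Fin d), IsPrefOf ω (p ++ [a]) ∧ IsPrefOf ω (p ++ v ++ [a])}

/-- `w` is a factor of the infinite word `ω`. -/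
def IsFactorOf {d : ℕ} (ω : ℕ → Fin d) (w : List (Fin d)) : Prop :=
  ∃ m : ℕ, w = (List.range w.length).map fun k => ω (m + k)

lemma isPrefOf_iff {d : ℕ} (ω : ℕ → Fin d) (l : List (Fin d)) :
    IsPrefOf ω l ↔ ∀ k (h : k < l.length), l[k] = ω k := by
  constructor
  · intro h k hk
    rw [List.getElem_of_eq h hk]
    simp
  · intro h
    apply List.ext_getElem (by simp)
    intro k h1 h2
    simpa using h k h1

lemma isFactorOf_iff {d : ℕ} (ω : ℕ → Fin d) (w : List (Fin d)) :
    IsFactorOf ω w ↔ ∃ m, ∀ k (h : k < w.length), w[k] = ω (m + k) := by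
  constructor
  · rintro ⟨m, h⟩
    refine ⟨m, fun k hk => ?_⟩
    rw [List.getElem_of_eq h hk]
    simp
  · rintro ⟨m, h⟩
    refine ⟨m, ?_⟩
    apply List.ext_getElem (by simp)
    intro k h1 h2
    simpa using h k h1

lemma factor_split {d : ℕ} (ω : ℕ → Fin d) {u r : List (Fin d)}
    (h : IsFactorOf ω (u ++ r)) : IsFactorOf ω u ∧ IsFactorOf ω r := by
  rw [isFactorOf_iff] at h
  obtain ⟨m, h⟩ := h
  constructor
  · rw [isFactorOf_iff]
    refine ⟨m, fun k hk => ?_⟩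
    have := h k (by simp; omega)
    rwa [List.getElem_append_left hk] at this
  · rw [isFactorOf_iff]
    refine ⟨m + u.length, fun k hk => ?_⟩
    have := h (u.length + k) (by simp; omega)
    rw [List.getElem_append_right (by omega)] at this
    simp only [Nat.add_sub_cancel_left] at this
    rw [this]
    ring_nf

lemma nil_mem_returnWords {d : ℕ} (ω : ℕ → Fin d) : ([] : List (Fin d)) ∈ returnWords ω := by
  refine ⟨[], ω 0, ?_, ?_⟩ <;> · rw [isPrefOf_iff]; intro k hk; simp at hk; subst hk; simp

lemma mem_returnWords_of_factor {d : ℕ} (ω : ℕ → Fin d) (a : Fin d) (v : List (Fin d))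
    (hne : v ≠ []) (hhead : v.head hne = a) (hfac : IsFactorOf ω (v ++ [a])) :
    v ∈ returnWords ω := by
  rw [isFactorOf_iff] at hfac
  obtain ⟨m, h⟩ := hfac
  have hv0 : 0 < v.length := List.length_pos_iff.mpr hne
  have ha : a = ω m := by
    have := h 0 (by simp)
    rw [List.getElem_append_left hv0] at this
    simp only [Nat.add_zero] at this
    rw [← hhead, List.head_eq_getElem, this]
  refine ⟨(List.range m).map ω, a, ?_, ?_⟩
  · rw [isPrefOf_iff]
    intro k hk
    simp only [List.length_append, List.length_map, List.length_range, List.length_cons,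
      List.length_nil] at hk
    rcases Nat.lt_or_ge k m with hkm | hkm
    · rw [List.getElem_append_left (by simpa using hkm)]; simp
    · have : k = m := by omega
      subst this
      rw [List.getElem_append_right (by simp)]
      simpa using ha
  · rw [isPrefOf_iff]
    intro k hk
    simp only [List.length_append, List.length_map, List.length_range, List.length_cons,
      List.length_nil] at hk
    have he : List.map ω (List.range m) ++ v ++ [a] = List.map ω (List.range m) ++ (v ++ [a]) := by
      simp
    rw [List.getElem_of_eq he (by simp only [List.length_append, List.length_map, List.length_range, List.length_cons, List.length_nil]; omega)]
    rcases Nat.lt_or_ge k m with hkm | hkm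
    · rw [List.getElem_append_left (by simpa using hkm)]; simp
    · rw [List.getElem_append_right (by simpa using hkm)]
      have := h (k - m) (by simp; omega)
      simp only [List.length_map, List.length_range]
      rw [this]
      congr 1
      omega

lemma last_split {α : Type*} [DecidableEq α] (b : α) :
    ∀ (l : List α), b ∈ l → ∃ v r, l = v ++ b :: r ∧ b ∉ r := by
  have first : ∀ (l : List α), b ∈ l → ∃ s t, l = s ++ b :: t ∧ b ∉ s := by
    intro l hl
    induction l with
    | nil => simp at hl
    | cons c l ih =>
      by_cases hcb : b = c
      · exact ⟨[], l, by simp [hcb], by simp⟩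
      · have : b ∈ l := by rcases List.mem_cons.mp hl with h | h; exact absurd h hcb; exact h
        obtain ⟨s, t, h1, h2⟩ := ih this
        exact ⟨c :: s, t, by rw [h1]; simp, by simp [h2, Ne.symm, hcb]⟩
  intro l hl
  obtain ⟨s, t, h1, h2⟩ := first l.reverse (by simpa using hl)
  refine ⟨t.reverse, s.reverse, ?_, by simpa using h2⟩
  have := congrArg List.reverse h1
  simpa using this

lemma key_s11 {d : ℕ} (ω : ℕ → Fin d) :
    ∀ n (w : List (Fin d)), w.length ≤ n → IsFactorOf ω w → w ≠ [] →
    ∃ ℓ : ℕ, 1 ≤ ℓ ∧ ∃ (a : Fin ℓ → Fin d) (v : Fin ℓ → List (Fin d)),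
      Function.Injective a ∧ (∀ j, a j ∈ w) ∧ (∀ j, v j ∈ returnWords ω) ∧
      w = (List.ofFn fun j => v j ++ [a j]).flatten := by
  intro n
  induction n with
  | zero =>
    intro w hw _ hne
    exact absurd (List.eq_nil_of_length_eq_zero (Nat.le_zero.mp hw)) hne
  | succ n ih =>
    intro w hw hfac hne
    set b := w.head hne with hb
    have hbmem : b ∈ w := List.head_mem hne
    obtain ⟨v, r, hsplit, hnr⟩ := last_split b w hbmem
    have hfac' : IsFactorOf ω ((v ++ [b]) ++ r) := by
      rw [List.append_assoc]; simpa using hsplit ▸ hfac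
    have hfvb : IsFactorOf ω (v ++ [b]) := (factor_split ω hfac').1
    have hfr : IsFactorOf ω r := (factor_split ω hfac').2
    have hvQ : v ∈ returnWords ω := by
      rcases eq_or_ne v [] with hv | hv
      · rw [hv]; exact nil_mem_returnWords ω
      · refine mem_returnWords_of_factor ω b v hv ?_ hfvb
        have h0v : 0 < v.length := List.length_pos_iff.mpr hv
        have : w.head hne = v.head hv := by
          rw [List.head_eq_getElem, List.head_eq_getElem, List.getElem_of_eq hsplit,
            List.getElem_append_left h0v]
        rw [hb]
        exact this.symm
    rcases eq_or_ne r [] with hr | hr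
    · refine ⟨1, le_refl 1, fun _ => b, fun _ => v, Function.injective_of_subsingleton _,
        fun _ => hbmem, fun _ => hvQ, ?_⟩
      rw [hsplit, hr]
      simp
    · have hrlen : r.length ≤ n := by
        have := congrArg List.length hsplit
        simp at this
        omega
      obtain ⟨ℓ', hℓ', a', v', hinj', hmem', hQ', hflat'⟩ := ih r hrlen hfr hr
      refine ⟨ℓ' + 1, by omega, Fin.cons b a', Fin.cons v v', ?_, ?_, ?_, ?_⟩
      · intro i j hij
        induction i using Fin.cases with
        | zero =>
          induction j using Fin.cases with
          | zero => rfl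
          | succ j =>
            simp only [Fin.cons_zero, Fin.cons_succ] at hij
            exact absurd (hij ▸ hmem' j) hnr
        | succ i =>
          induction j using Fin.cases with
          | zero =>
            simp only [Fin.cons_zero, Fin.cons_succ] at hij
            exact absurd (hij ▸ hmem' i) hnr
          | succ j =>
            simp only [Fin.cons_succ] at hij
            exact congrArg Fin.succ (hinj' hij)
      · intro j
        induction j using Fin.cases with
        | zero => simpa using hbmem
        | succ j =>
          simp only [Fin.cons_succ]
          rw [hsplit]
          exact List.mem_append.mpr (Or.inr (List.mem_cons.mpr (Or.inr (hmem' j))))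
      · intro j
        induction j using Fin.cases with
        | zero => simpa using hvQ
        | succ j => simpa using hQ' j
      · rw [hsplit, List.ofFn_succ]
        simp only [Fin.cons_zero, Fin.cons_succ, List.flatten_cons]
        rw [← hflat']
        simp

/-- every non-empty factor `w` of an infinite word `ω` over a `d`-letter
alphabet can be written `w = v₁a₁v₂a₂⋯v_ℓa_ℓ` with `1 ≤ ℓ ≤ d`, pairwise distinct letters
`a_j`, and each `v_j` a return-like word of `ω`. -/
theorem stmt_11 {d : ℕ} (ω : ℕ → Fin d) (w : List (Fin d)) (hw : IsFactorOf ω w)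
    (hne : w ≠ []) :
    ∃ ℓ : ℕ, 1 ≤ ℓ ∧ ℓ ≤ d ∧
      ∃ (a : Fin ℓ → Fin d) (v : Fin ℓ → List (Fin d)),
        Function.Injective a ∧ (∀ j, v j ∈ returnWords ω) ∧
        w = (List.ofFn fun j => v j ++ [a j]).flatten := by
  obtain ⟨ℓ, hℓ, a, v, hinj, _, hQ, hflat⟩ := key_s11 ω w.length w le_rfl hw hne
  refine ⟨ℓ, hℓ, ?_, a, v, hinj, hQ, hflat⟩
  simpa using Fintype.card_le_of_injective a hinj
end

section
/- Let R_t be a minimal translation on 𝕋^{d−1}, let F ⊂ ℝ^{d−1} be a bounded measurable fundamental domain with a natural measurable partition {F₁,…,F_d} and translation vectors t₁,…,t_d ∈ ℝ^{d−1} with t_i ≡ t (mod ℤ^{d−1}) and t_i + F_i ⊂ F. Set u_i = λ(F_i) (Lebesgue measure). Then Σ_{i=1}^d u_i t_i = 0. -/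
open MeasureTheory

/-- let `R_t` be (coded by) an exchange of domains `S` on a bounded
measurable fundamental domain `F ⊂ ℝ^{d−1}` of measure 1, with natural measurable
partition `{F₁,…,F_d}` and translation vectors `t₁,…,t_d ≡ t (mod ℤ^{d−1})` such that
`t_i + F_i ⊂ F`; suppose `S` is ergodic on `F`. With `u_i = λ(F_i)` one has
`∑ u_i t_i = 0`. -/
theorem stmt_12 (d : ℕ) (hd : 1 ≤ d)
    (F : Set (Fin (d - 1) → ℝ)) (Fi : Fin d → Set (Fin (d - 1) → ℝ))
    (t : Fin (d - 1) → ℝ) (ti : Fin d → Fin (d - 1) → ℝ)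
    (hFbdd : Bornology.IsBounded F)
    (hFvol : volume F = 1)
    (hFmeas : ∀ i, MeasurableSet (Fi i))
    (hcover : F = ⋃ i, Fi i)
    (hdisj : ∀ i j, i ≠ j → volume (Fi i ∩ Fi j) = 0)
    (hti : ∀ i, ∃ z : Fin (d - 1) → ℤ, ti i = fun k => t k + (z k : ℝ))
    (htiF : ∀ i, (fun x => x + ti i) '' Fi i ⊆ F)
    (S : (Fin (d - 1) → ℝ) → (Fin (d - 1) → ℝ))
    (hS : ∀ i, ∀ x ∈ interior (Fi i), S x = x + ti i)
    (hSmaps : Set.MapsTo S F F)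
    (hae : volume (F \ ⋃ i, interior (Fi i)) = 0)
    (herg : Ergodic S (volume.restrict F)) :
    ∑ i, (volume (Fi i)).toReal • ti i = 0 := by
  set μ : Measure (Fin (d - 1) → ℝ) := volume.restrict F with hμ
  have hFm : MeasurableSet F := by
    rw [hcover]; exact MeasurableSet.iUnion hFmeas
  haveI : IsFiniteMeasure μ := by
    constructor
    rw [hμ, Measure.restrict_apply_univ, hFvol]
    exact ENNReal.one_lt_top
  obtain ⟨C, hC⟩ := hFbdd.exists_norm_le
  have haeF : ∀ᵐ x ∂μ, x ∈ F := ae_restrict_mem hFm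
  have hSmeas : Measurable S := herg.toMeasurePreserving.measurable
  -- integrability of id and S
  have hint_id : Integrable (fun x => x) μ := by
    refine ⟨measurable_id.aestronglyMeasurable, ?_⟩
    exact HasFiniteIntegral.of_bounded (C := C) (haeF.mono fun x hx => hC x hx)
  have hint_S : Integrable S μ := by
    refine ⟨hSmeas.aestronglyMeasurable, ?_⟩
    exact HasFiniteIntegral.of_bounded (C := C)
      (haeF.mono fun x hx => hC _ (hSmaps hx))
  -- ∫ S = ∫ id
  have hmap : Measure.map S μ = μ := herg.toMeasurePreserving.map_eq
  have hintS_eq : ∫ x, S x ∂μ = ∫ x, x ∂μ := by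
    have := integral_map (φ := S) (μ := μ) (f := fun y => y)
      hSmeas.aemeasurable
      (by rw [hmap]; exact measurable_id.aestronglyMeasurable)
    rw [hmap] at this
    exact this.symm
  have hzero : ∫ x, (S x - x) ∂μ = 0 := by
    rw [integral_sub hint_S hint_id, hintS_eq, sub_self]
  -- compute ∫ (S x - x) as the sum
  have hintg : Integrable (fun x => S x - x) μ := hint_S.sub hint_id
  have hsum : ∫ x, (S x - x) ∂μ = ∑ i, (volume (Fi i)).toReal • ti i := by
    have hc : (∫ x, (S x - x) ∂μ) = ∫ x in ⋃ i, Fi i, (S x - x) := by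
      rw [hμ, hcover]
    rw [hc, integral_iUnion_ae (fun i => (hFmeas i).nullMeasurableSet)
      (fun i j hij => hdisj i j hij) (by rw [← hcover]; exact hintg),
      tsum_fintype]
    refine Finset.sum_congr rfl fun i _ => ?_
    have hae_i : (fun x => S x - x) =ᵐ[volume.restrict (Fi i)] fun _ => ti i := by
      rw [Filter.EventuallyEq, ae_restrict_iff' (hFmeas i)]
      have hnull : volume ((F \ ⋃ j, interior (Fi j)) ∪
          ⋃ j, ⋃ _ : j ≠ i, (Fi i ∩ Fi j)) = 0 := by
        refine measure_union_null hae ?_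
        refine measure_iUnion_null fun j => measure_iUnion_null fun hj => ?_
        rw [Set.inter_comm]; exact hdisj j i hj
      refine ae_iff.mpr (measure_mono_null ?_ hnull)
      intro x hx
      simp only [Set.mem_setOf_eq, not_forall] at hx
      obtain ⟨hxi, hne⟩ := hx
      have hxF : x ∈ F := by rw [hcover]; exact Set.mem_iUnion.mpr ⟨i, hxi⟩
      by_cases hx' : x ∈ ⋃ j, interior (Fi j)
      · obtain ⟨j, hxj⟩ := Set.mem_iUnion.mp hx'
        have hji : j ≠ i := by
          rintro rfl
          exact hne (by rw [hS j x hxj]; abel)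
        exact Or.inr (Set.mem_iUnion.mpr ⟨j, Set.mem_iUnion.mpr
          ⟨hji, ⟨hxi, interior_subset hxj⟩⟩⟩)
      · exact Or.inl ⟨hxF, hx'⟩
    rw [integral_congr_ae hae_i, setIntegral_const]
    rfl
  rw [hsum] at hzero
  exact hzero
end

section
/- Let (X, Σ) be a subshift over {1,…,d} that is a natural coding of a minimal translation R_t on 𝕋^{d−1} with respect to a partition {F₁,…,F_d} of a bounded fundamental domain F. Then the language of X is C-balanced for C = 2c·diam(F), where c > 0 satisfies ‖x‖_∞ ≤ c‖Nx‖_∞ for all x ∈ 1^⊥ and N is the matrix of translation vectors. -/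
/-- let `L` be the language of a subshift over `{1,…,d}` that is a natural
coding of a minimal translation on `𝕋^{d−1}` w.r.t. a partition of a bounded fundamental
domain `F`; i.e. (with `N` the matrix of translation vectors) for every `w ∈ L` there is
`x ∈ F` with `x + N·l(w) ∈ F`. If `c > 0` satisfies `‖x‖ ≤ c‖Nx‖` on `1^⊥`, then `L` is
`C`-balanced with `C = 2c·diam F`. -/
theorem stmt_14 (d : ℕ) (L : Set (List (Fin d)))
    (F : Set (Fin (d - 1) → ℝ)) (hFbdd : Bornology.IsBounded F)
    (N : Matrix (Fin (d - 1)) (Fin d) ℝ) (c : ℝ) (hc0 : 0 < c)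
    (hc : ∀ x : Fin d → ℝ, (∑ i, x i) = 0 → ‖x‖ ≤ c * ‖N.mulVec x‖)
    (hcode : ∀ w ∈ L, ∃ x ∈ F, x + N.mulVec (fun i => (w.count i : ℝ)) ∈ F) :
    ∀ v ∈ L, ∀ w ∈ L, v.length = w.length → ∀ i : Fin d,
      |(v.count i : ℝ) - (w.count i : ℝ)| ≤ 2 * c * Metric.diam F := by
  intro v hv w hw hlen i
  obtain ⟨x, hx, hx'⟩ := hcode v hv
  obtain ⟨y, hy, hy'⟩ := hcode w hw
  set lv : Fin d → ℝ := fun i => (v.count i : ℝ)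
  set lw : Fin d → ℝ := fun i => (w.count i : ℝ)
  have hsum : (∑ j, (lv - lw) j) = 0 := by
    have h1 : (∑ j, lv j) = (v.length : ℝ) := by
      simp only [lv]
      rw [← Nat.cast_sum]
      congr 1
      simpa using Multiset.sum_count_eq_card (s := Finset.univ) (m := (v : Multiset (Fin d))) (fun a _ => Finset.mem_univ a)
    have h2 : (∑ j, lw j) = (w.length : ℝ) := by
      simp only [lw]
      rw [← Nat.cast_sum]
      congr 1
      simpa using Multiset.sum_count_eq_card (s := Finset.univ) (m := (w : Multiset (Fin d))) (fun a _ => Finset.mem_univ a)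
    simp [Finset.sum_sub_distrib, h1, h2, hlen]
  have key := hc (lv - lw) hsum
  have hmv : N.mulVec (lv - lw) = (x + N.mulVec lv - (y + N.mulVec lw)) - (x - y) := by
    rw [Matrix.mulVec_sub]
    abel
  have hbound : ‖N.mulVec (lv - lw)‖ ≤ 2 * Metric.diam F := by
    rw [hmv]
    calc ‖(x + N.mulVec lv - (y + N.mulVec lw)) - (x - y)‖
        ≤ ‖x + N.mulVec lv - (y + N.mulVec lw)‖ + ‖x - y‖ := norm_sub_le _ _
      _ ≤ Metric.diam F + Metric.diam F := by
          gcongr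
          · exact Metric.dist_le_diam_of_mem hFbdd hx' hy'
          · exact Metric.dist_le_diam_of_mem hFbdd hx hy
      _ = 2 * Metric.diam F := by ring
  have h1 : |lv i - lw i| ≤ ‖lv - lw‖ := by
    have := norm_le_pi_norm (lv - lw) i
    simpa [Real.norm_eq_abs] using this
  calc |lv i - lw i| ≤ ‖lv - lw‖ := h1
    _ ≤ c * ‖N.mulVec (lv - lw)‖ := key
    _ ≤ c * (2 * Metric.diam F) := by gcongr
    _ = 2 * c * Metric.diam F := by ring
end

section
/- Let t ∈ ℝ^{d−1} be totally irrational (i.e., 1, t₁, …, t_{d−1} are rationally independent, equivalently R_t is minimal on 𝕋^{d−1}). Let t₁,…,t_d ∈ ℝ^{d−1} satisfy t_i ≡ t (mod ℤ^{d−1}) for all i, and let u ∈ ℝ^d with Σu_i = 1, u_i > 0, and Σ_{i=1}^d u_i t_i = 0. Then u has rationally independent coordinates: there is no nonzero z ∈ ℤ^d with ⟨z, u⟩ = 0. -/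
/-- let `t ∈ ℝ^{d−1}` be totally irrational (`1, t₁, …, t_{d−1}` rationally
independent), `t₁,…,t_d ≡ t (mod ℤ^{d−1})`, and `u ∈ ℝ^d` with `∑ u_i = 1`, `u_i > 0` and
`∑ u_i t_i = 0`. Then `u` has rationally independent coordinates: no nonzero `z ∈ ℤ^d`
satisfies `⟨z, u⟩ = 0`. -/
theorem stmt_15 (d : ℕ) (t : Fin (d - 1) → ℝ)
    (hirr : ∀ (z : Fin (d - 1) → ℤ) (z0 : ℤ),
      (∑ k, (z k : ℝ) * t k) + z0 = 0 → z = 0 ∧ z0 = 0)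
    (ti : Fin d → Fin (d - 1) → ℝ)
    (hti : ∀ i, ∃ z : Fin (d - 1) → ℤ, ti i = fun k => t k + (z k : ℝ))
    (u : Fin d → ℝ) (hsum : ∑ i, u i = 1) (hpos : ∀ i, 0 < u i)
    (hut : ∑ i, u i • ti i = 0) :
    ∀ z : Fin d → ℤ, (∑ i, (z i : ℝ) * u i) = 0 → z = 0 := by
  intro z hz
  by_contra hz0
  obtain ⟨n, rfl⟩ : ∃ n, d = n + 1 := by
    cases d with
    | zero => simp at hsum
    | succ n => exact ⟨n, rfl⟩
  obtain ⟨j, hj⟩ : ∃ j, z j ≠ 0 := by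
    by_contra h; push_neg at h; exact hz0 (funext fun i => h i)
  choose m hm using hti
  -- componentwise relation:  t k + ∑ i, u i * m i k = 0
  have hcomp : ∀ k, t k + ∑ i, u i * (m i k : ℝ) = 0 := by
    intro k
    have h1 := congrFun hut k
    simp only [Finset.sum_apply, Pi.smul_apply, Pi.zero_apply, smul_eq_mul] at h1
    have h2 : ∑ i, u i * ti i k = ∑ i, (u i * t k + u i * (m i k : ℝ)) :=
      Finset.sum_congr rfl fun i _ => by rw [hm i]; ring
    rw [h2, Finset.sum_add_distrib, ← Finset.sum_mul, hsum, one_mul] at h1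
    exact h1
  set W : Submodule ℚ ℝ := Submodule.span ℚ (u '' {i | i ≠ j}) with hW
  have hmemW : ∀ (x : ℝ) (q : ℚ), x ∈ W → (q : ℝ) * x ∈ W := fun x q hx => by
    simpa [Rat.smul_def] using W.smul_mem q hx
  have hiu : ∀ i, u i ∈ W := by
    have hne : ∀ i, i ≠ j → u i ∈ W := fun i hi =>
      Submodule.subset_span ⟨i, hi, rfl⟩
    intro i
    rcases eq_or_ne i j with rfl | hij
    · -- use the relation z·u = 0
      have hzj : (z i : ℝ) ≠ 0 := Int.cast_ne_zero.mpr hj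
      have hS : ∑ k ∈ Finset.univ.erase i, (z k : ℝ) * u k ∈ W :=
        Submodule.sum_mem _ fun k hk => by
          have : ((z k : ℚ) : ℝ) = (z k : ℝ) := by push_cast; ring
          rw [← this]
          exact hmemW _ _ (hne k (Finset.ne_of_mem_erase hk))
      have heq : u i = (-(z i : ℚ)⁻¹ : ℚ) * ∑ k ∈ Finset.univ.erase i, (z k : ℝ) * u k := by
        have h := Finset.add_sum_erase Finset.univ (fun k => (z k : ℝ) * u k)
          (Finset.mem_univ i)
        rw [hz] at h
        have hcast : ((-(z i : ℚ)⁻¹ : ℚ) : ℝ) = -((z i : ℝ))⁻¹ := by push_cast; ring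
        rw [hcast]
        field_simp
        linarith [h]
      rw [heq]
      exact hmemW _ _ hS
    · exact hne i hij
  have h1W : (1 : ℝ) ∈ W := by rw [← hsum]; exact Submodule.sum_mem _ fun i _ => hiu i
  have htW : ∀ k, t k ∈ W := by
    intro k
    have key : t k = ∑ i, ((-(m i k) : ℚ) : ℝ) * u i := by
      push_cast
      have hswap : ∑ i, (-(m i k : ℝ)) * u i = ∑ i, -(u i * (m i k : ℝ)) :=
        Finset.sum_congr rfl fun i _ => by ring
      rw [hswap, Finset.sum_neg_distrib]
      linarith [hcomp k]
    rw [key]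
    exact Submodule.sum_mem _ fun i _ => hmemW _ _ (hiu i)
  -- the family (t, 1)
  set v : Fin (n + 1) → ℝ := Fin.snoc t 1 with hv
  have hvW : ∀ i, v i ∈ W := by
    intro i
    refine Fin.lastCases ?_ ?_ i
    · simpa [hv] using h1W
    · intro k; simpa [hv] using htW k
  have hLIZ : LinearIndependent ℤ v := by
    rw [linearIndependent_iff']
    intro s g hg i hi
    set g' : Fin (n + 1) → ℤ := fun i => if i ∈ s then g i else 0 with hg'
    have hsum' : ∑ i, g' i • v i = 0 :=
      calc ∑ i, g' i • v i
          = ∑ i ∈ s, g' i • v i :=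
            (Finset.sum_subset (Finset.subset_univ s)
              (fun x _ hx => by simp [g', hx])).symm
        _ = ∑ i ∈ s, g i • v i := Finset.sum_congr rfl fun i hi => by simp [g', hi]
        _ = 0 := hg
    rw [Fin.sum_univ_castSucc] at hsum'
    simp only [hv, Fin.snoc_castSucc, Fin.snoc_last, smul_eq_mul, mul_one,
      zsmul_eq_mul] at hsum'
    have hirr' := hirr (fun k => g' (Fin.castSucc k)) (g' (Fin.last n)) (by
      push_cast
      convert hsum' using 2
      rfl)
    have hall : ∀ i, g' i = 0 := by
      intro i
      refine Fin.lastCases ?_ ?_ i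
      · exact hirr'.2
      · intro k; exact congrFun hirr'.1 k
    have := hall i
    rw [hg'] at this
    simpa [hi] using this
  have hLIQ : LinearIndependent ℚ v := (LinearIndependent.iff_fractionRing ℤ ℚ).mp hLIZ
  set vW : Fin (n + 1) → W := fun i => ⟨v i, hvW i⟩ with hvWdef
  have hLIW : LinearIndependent ℚ vW := by
    apply LinearIndependent.of_comp W.subtype
    convert hLIQ using 1
    rfl
  have hcard1 : (Fintype.card (Fin (n + 1)) : Cardinal) ≤ Module.rank ℚ W := by
    simpa [Cardinal.mk_fintype] using hLIW.cardinal_le_rank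
  have hcard2 : Module.rank ℚ W ≤ Cardinal.mk (u '' {i | i ≠ j}) := rank_span_le _
  have hcard3 : Cardinal.mk (u '' {i | i ≠ j})
      ≤ Cardinal.mk ({i | i ≠ j} : Set (Fin (n+1))) :=
    Cardinal.mk_image_le
  have hcard4 : Cardinal.mk ({i | i ≠ j} : Set (Fin (n+1))) = (n : Cardinal) := by
    have hset : ({i | i ≠ j} : Set (Fin (n+1))) = ({j} : Set (Fin (n+1)))ᶜ := by
      ext i; simp
    rw [hset, Cardinal.mk_fintype, Fintype.card_compl_set]
    simp
  have : ((n : ℕ) + 1 : Cardinal) ≤ (n : Cardinal) := by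
    calc ((n:ℕ) + 1 : Cardinal) = (Fintype.card (Fin (n+1)) : Cardinal) := by simp
    _ ≤ Module.rank ℚ W := hcard1
    _ ≤ _ := hcard2.trans (hcard3.trans_eq hcard4)
  have : (n + 1 : ℕ) ≤ n := by exact_mod_cast this
  omega
end

section
/- Let (𝔇, Σ, ν) be ergodic and let D̃ carry a factor structure via a map ψ : 𝔇 → D with ψ ∘ Σ^k = Σ ∘ ψ. If D' ⊆ D is Σ-invariant (mod ν∘ψ⁻¹-null sets) with ν(ψ⁻¹(D')) > 0, then ν(ψ⁻¹(D')) ≥ 1/k. Consequently, (D, Σ, ν∘ψ⁻¹) decomposes into at most k ergodic components. -/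
open MeasureTheory

/-- let `(𝔇, T, ν)` be ergodic (probability) and `ψ : 𝔇 → D` intertwine
`T^k` with `S` (`ψ ∘ T^[k] = S ∘ ψ`). If `D' ⊆ D` is `S`-invariant mod `ν∘ψ⁻¹`-null sets
and has positive measure, then `(ν∘ψ⁻¹)(D') ≥ 1/k`. Consequently `(D, S, ν∘ψ⁻¹)` has at
most `k` ergodic components: there are no `k+1` pairwise disjoint invariant sets of
positive measure. -/
theorem stmt_17 {X Y : Type*} [MeasurableSpace X] [MeasurableSpace Y]
    (ν : Measure X) [IsProbabilityMeasure ν]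
    (T : X → X) (hT : Ergodic T ν)
    (k : ℕ) (hk : 1 ≤ k)
    (S : Y → Y) (hS : Measurable S)
    (ψ : X → Y) (hψ : Measurable ψ)
    (hcomm : ψ ∘ T^[k] = S ∘ ψ) :
    (∀ D' : Set Y, MeasurableSet D' →
      (ν.map ψ) (symmDiff (S ⁻¹' D') D') = 0 →
      0 < (ν.map ψ) D' →
      (1 : ENNReal) / (k : ENNReal) ≤ (ν.map ψ) D') ∧
    ∀ E : Fin (k + 1) → Set Y, (∀ i, MeasurableSet (E i)) →
      Pairwise (Function.onFun Disjoint E) →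
      (∀ i, (ν.map ψ) (symmDiff (S ⁻¹' E i) (E i)) = 0) →
      ∃ i, (ν.map ψ) (E i) = 0 := by
  have hk0 : (k : ENNReal) ≠ 0 := by exact_mod_cast Nat.one_le_iff_ne_zero.mp hk
  have hktop : (k : ENNReal) ≠ ⊤ := ENNReal.natCast_ne_top k
  have hmain : ∀ D' : Set Y, MeasurableSet D' →
      (ν.map ψ) (symmDiff (S ⁻¹' D') D') = 0 →
      0 < (ν.map ψ) D' →
      (1 : ENNReal) / (k : ENNReal) ≤ (ν.map ψ) D' := by
    intro D' hD' hinv hpos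
    have hmapval : ∀ s : Set Y, MeasurableSet s → (ν.map ψ) s = ν (ψ ⁻¹' s) :=
      fun s hs => Measure.map_apply hψ hs
    set A : Set X := ψ ⁻¹' D' with hAdef
    have hAm : MeasurableSet A := hψ hD'
    have hApos : 0 < ν A := by rwa [hmapval D' hD'] at hpos
    -- A is almost T^[k]-invariant
    have hpre : (T^[k]) ⁻¹' A = ψ ⁻¹' (S ⁻¹' D') := by
      rw [hAdef, ← Set.preimage_comp, hcomm, Set.preimage_comp]
    have hinvA : ν (symmDiff ((T^[k]) ⁻¹' A) A) = 0 := by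
      rw [hpre, hAdef, ← Set.preimage_symmDiff, ← hmapval _ ((hS hD').symmDiff hD')]
      exact hinv
    -- the union B of the first k preimages of A
    set B : Set X := ⋃ i ∈ Finset.range k, (T^[i]) ⁻¹' A with hBdef
    have hBm : MeasurableSet B :=
      MeasurableSet.biUnion (Finset.range k).countable_toSet
        (fun i _ => (hT.measurable.iterate i) hAm)
    have hAB : A ⊆ B := by
      intro x hx
      exact Set.mem_biUnion (Finset.mem_range.mpr hk) hx
    -- B is almost T-invariant
    have hsub : symmDiff (T ⁻¹' B) B ⊆ symmDiff ((T^[k]) ⁻¹' A) A := by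
      intro x hx
      rcases hx with ⟨hx1, hx2⟩ | ⟨hx1, hx2⟩
      · -- x ∈ T⁻¹ B, x ∉ B
        simp only [hBdef, Set.mem_preimage, Set.mem_iUnion, Finset.mem_range,
          exists_prop] at hx1 hx2
        obtain ⟨i, hi, hxi⟩ := hx1
        have hxi' : x ∈ (T^[i + 1]) ⁻¹' A := by
          simpa [Function.iterate_succ, Set.preimage_comp] using hxi
        rcases Nat.lt_or_ge (i + 1) k with h | h
        · exact absurd ⟨i + 1, h, hxi'⟩ hx2
        · have : i + 1 = k := le_antisymm (Nat.succ_le_of_lt hi) h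
          left
          refine ⟨by rwa [← this], fun hxA => hx2 ⟨0, Nat.lt_of_lt_of_le Nat.one_pos hk, ?_⟩⟩
          simpa using hxA
      · -- x ∈ B, x ∉ T⁻¹ B
        simp only [hBdef, Set.mem_preimage, Set.mem_iUnion, Finset.mem_range,
          exists_prop] at hx1 hx2
        obtain ⟨i, hi, hxi⟩ := hx1
        rcases Nat.eq_zero_or_pos i with rfl | hipos
        · right
          refine ⟨by simpa using hxi, fun hxk => ?_⟩
          have : x ∈ (T^[(k - 1) + 1]) ⁻¹' A := by
            rwa [Nat.sub_add_cancel hk]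
          have : T x ∈ (T^[k - 1]) ⁻¹' A := by
            simpa [Function.iterate_succ, Set.preimage_comp] using this
          exact hx2 ⟨k - 1, Nat.sub_lt (Nat.lt_of_lt_of_le Nat.one_pos hk) Nat.one_pos, this⟩
        · obtain ⟨j, rfl⟩ := Nat.exists_eq_add_of_lt hipos
          have : T x ∈ (T^[j]) ⁻¹' A := by
            simpa [Nat.add_comm, Function.iterate_succ, Set.preimage_comp] using hxi
          exact absurd ⟨j, Nat.lt_of_succ_lt (by simpa [Nat.add_comm] using hi), this⟩ hx2
    have hBinv : T ⁻¹' B =ᵐ[ν] B := by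
      rw [← measure_symmDiff_eq_zero_iff]
      exact measure_mono_null hsub hinvA
    -- ergodicity: ν B = 0 or 1; positivity forces 1
    rcases hT.quasiErgodic.ae_empty_or_univ₀ hBm.nullMeasurableSet hBinv with h | h
    · exfalso
      have hB0 : ν B = 0 := by
        rw [measure_congr h]; simp
      exact hApos.ne' (measure_mono_null hAB hB0)
    · have hB1 : ν B = 1 := by
        rw [measure_congr h]; simp
      -- subadditivity
      have hle : ν B ≤ ∑ i ∈ Finset.range k, ν ((T^[i]) ⁻¹' A) :=
        measure_biUnion_finset_le _ _
      have hpres : ∀ i : ℕ, ν ((T^[i]) ⁻¹' A) = ν A := fun i =>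
        (hT.toMeasurePreserving.iterate i).measure_preimage hAm.nullMeasurableSet
      have : (1 : ENNReal) ≤ (k : ENNReal) * ν A := by
        calc (1 : ENNReal) = ν B := hB1.symm
        _ ≤ ∑ i ∈ Finset.range k, ν ((T^[i]) ⁻¹' A) := hle
        _ = (k : ENNReal) * ν A := by
            simp [hpres, Finset.sum_const]
      rw [hmapval D' hD']
      show (1 : ENNReal) / (k : ENNReal) ≤ ν A
      rw [ENNReal.div_le_iff_le_mul (Or.inl hk0) (Or.inl hktop)]
      rwa [mul_comm] at this
  refine ⟨hmain, fun E hEm hEd hEinv => ?_⟩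
  by_contra h
  push_neg at h
  have hlow : ∀ i, (1 : ENNReal) / (k : ENNReal) ≤ (ν.map ψ) (E i) := fun i =>
    hmain (E i) (hEm i) (hEinv i) (pos_iff_ne_zero.mpr (h i))
  have : IsProbabilityMeasure (ν.map ψ) := Measure.isProbabilityMeasure_map hψ.aemeasurable
  have hsum : ∑ i : Fin (k + 1), (ν.map ψ) (E i) ≤ 1 := by
    rw [← tsum_fintype (L := SummationFilter.unconditional _), ← measure_iUnion hEd hEm]
    exact prob_le_one
  have hsum' : ((k : ENNReal) + 1) / (k : ENNReal) ≤ 1 := by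
    calc ((k : ENNReal) + 1) / (k : ENNReal)
        = ∑ _i : Fin (k + 1), (1 : ENNReal) / (k : ENNReal) := by
          rw [Finset.sum_const, Finset.card_univ, Fintype.card_fin, nsmul_eq_mul,
            Nat.cast_add, Nat.cast_one, mul_one_div]
      _ ≤ ∑ i : Fin (k + 1), (ν.map ψ) (E i) := Finset.sum_le_sum fun i _ => hlow i
      _ ≤ 1 := hsum
  rw [ENNReal.div_le_iff_le_mul (Or.inl hk0) (Or.inl hktop), one_mul] at hsum'
  exact absurd hsum' (by simp [ENNReal.lt_add_right hktop one_ne_zero])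
end

section
/- The composition τ = β₁₂ ∘ β₂₃ ∘ β₃₄ ∘ β₄₁ of Brun substitutions over {1,2,3,4} (where β_{ij} sends j ↦ ij and fixes all other letters) satisfies τ(1) = 12341, τ(2) = 12, τ(3) = 123, τ(4) = 1234, and the characteristic polynomial of its incidence matrix is the minimal polynomial of a Pisot number. -/
/-- The Brun substitution `β_{ij} : j ↦ ij, k ↦ k (k ≠ j)` over `{1,2,3,4}` (letters
shifted to `0,1,2,3`). -/
def brun (i j : Fin 4) : Fin 4 → List (Fin 4) := fun k => if k = j then [i, j] else [k]

/-- The composition `τ = β₁₂ ∘ β₂₃ ∘ β₃₄ ∘ β₄₁` (apply `β₄₁` first). -/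
def brunτ : Fin 4 → List (Fin 4) :=
  fun j => (((brun 3 0 j).flatMap (brun 2 3)).flatMap (brun 1 2)).flatMap (brun 0 1)

section
open Polynomial Complex


noncomputable def qZ : ℤ[X] := X^4 + C (-5) * X^3 + C 6 * X^2 + C (-4) * X + C 1

lemma qZ_monic : qZ.Monic := by unfold qZ; monicity!

lemma q2_eq : qZ.map (Int.castRingHom (ZMod 2)) = X^4 + X^3 + 1 := by
  have h5 : ((Int.castRingHom (ZMod 2)) (-5) : ZMod 2) = 1 := by decide
  have h6 : ((Int.castRingHom (ZMod 2)) 6 : ZMod 2) = 0 := by decide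
  have h4 : ((Int.castRingHom (ZMod 2)) (-4) : ZMod 2) = 0 := by decide
  have h1 : ((Int.castRingHom (ZMod 2)) 1 : ZMod 2) = 1 := by decide
  simp only [qZ, Polynomial.map_add, Polynomial.map_mul, Polynomial.map_pow, Polynomial.map_X,
    Polynomial.map_C, Polynomial.map_one, h5, h6, h4, h1, map_one, C_1, C_0]
  ring

lemma monic_natDegree_two_eq {R : Type*} [CommRing R] {p : R[X]} (hm : p.Monic)
    (h2 : p.natDegree = 2) : p = X^2 + C (p.coeff 1) * X + C (p.coeff 0) := by
  ext n
  simp only [coeff_add, coeff_C_mul, coeff_C, coeff_X_pow, coeff_X]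
  match n with
  | 0 => simp
  | 1 => simp
  | 2 => simpa using (h2 ▸ hm.coeff_natDegree)
  | (n+3) =>
    rw [coeff_eq_zero_of_natDegree_lt (by omega)]
    simp only [if_neg (by omega : ¬ (n+3 = 2)), if_neg (by omega : ¬ (1 = n+3)),
      if_neg (by omega : ¬ (n+3 = 0))]
    ring

lemma q2_irred : Irreducible (X^4 + X^3 + 1 : (ZMod 2)[X]) := by
  have hm : (X^4 + X^3 + 1 : (ZMod 2)[X]).Monic := by monicity!
  have hd : (X^4 + X^3 + 1 : (ZMod 2)[X]).natDegree = 4 := by compute_degree!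
  have h1 : (X^4 + X^3 + 1 : (ZMod 2)[X]) ≠ 1 := fun h => by
    have := congrArg natDegree h; rw [hd, natDegree_one] at this; omega
  have hroot : ∀ x : ZMod 2, ¬ IsRoot (X^4 + X^3 + 1 : (ZMod 2)[X]) x := by
    intro x
    simp only [IsRoot, eval_add, eval_pow, eval_X, eval_one]
    revert x; decide
  rw [hm.irreducible_iff_lt_natDegree_lt h1]
  rintro q hq hdq hdvd
  rw [hd] at hdq
  simp only [Finset.mem_Ioc] at hdq
  have hcases : q.natDegree = 1 ∨ q.natDegree = 2 := by omega
  rcases hcases with hq2 | hq2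
  · -- degree 1
    have hdvd' : (X - C (-(q.coeff 0))) ∣ (X^4 + X^3 + 1 : (ZMod 2)[X]) := by
      rw [map_neg, sub_neg_eq_add, ← hq.eq_X_add_C hq2]; exact hdvd
    exact hroot _ (dvd_iff_isRoot.mp hdvd')
  · -- degree 2
    obtain ⟨r, hr⟩ := hdvd
    have hrm : r.Monic := hq.of_mul_monic_left (hr ▸ hm)
    have hrd : r.natDegree = 2 := by
      have h4 : q.natDegree + r.natDegree = 4 := by rw [← hq.natDegree_mul hrm, ← hr, hd]
      omega
    have hqe := monic_natDegree_two_eq hq hq2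
    have hre := monic_natDegree_two_eq hrm hrd
    set a := q.coeff 1; set b := q.coeff 0; set c := r.coeff 1; set d := r.coeff 0
    have key : (X^4 + X^3 + 1 : (ZMod 2)[X])
        = X^4 + C (a + c) * X^3 + C (b + d + a*c) * X^2 + C (a*d + b*c) * X + C (b*d) := by
      rw [hr, hqe, hre]; simp only [C_add, C_mul]; ring
    have e3 := congrArg (fun p => coeff p 3) key
    have e2 := congrArg (fun p => coeff p 2) key
    have e1 := congrArg (fun p => coeff p 1) key
    have e0 := congrArg (fun p => coeff p 0) key
    simp only [coeff_add, coeff_X_pow, coeff_C_mul, coeff_C, coeff_one, coeff_X] at e3 e2 e1 e0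
    norm_num at e3 e2 e1 e0
    clear_value a b c d
    clear key hqe hre hr
    revert e3 e2 e1 e0
    revert a b c d
    decide

lemma qZ_irred : Irreducible qZ :=
  qZ_monic.irreducible_of_irreducible_map (Int.castRingHom (ZMod 2)) qZ (q2_eq ▸ q2_irred)


lemma pQ_eq' : qZ.map (Int.castRingHom ℚ) = X^4 - 5*X^3 + 6*X^2 - 4*X + 1 := by
  simp only [qZ, Polynomial.map_add, Polynomial.map_mul, Polynomial.map_pow, Polynomial.map_X,
    Polynomial.map_C]
  push_cast
  simp only [map_neg, map_ofNat, map_one]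
  ring

lemma pQ_irred : Irreducible (X^4 - 5*X^3 + 6*X^2 - 4*X + 1 : ℚ[X]) := by
  rw [← pQ_eq']
  exact (Polynomial.IsPrimitive.Int.irreducible_iff_irreducible_map_cast
    qZ_monic.isPrimitive).mp qZ_irred

set_option maxHeartbeats 1000000 in
lemma brun_charpoly : (Matrix.of fun i j : Fin 4 => ((brunτ j).count i : ℚ)).charpoly
    = X^4 - 5*X^3 + 6*X^2 - 4*X + 1 := by
  have hM : (Matrix.of fun i j : Fin 4 => ((brunτ j).count i : ℚ))
      = !![2,1,1,1;1,1,1,1;1,0,1,1;1,0,0,1] := by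
    ext i j
    fin_cases i <;> fin_cases j <;> simp [brunτ, brun, Matrix.vecHead, Matrix.vecTail]
  rw [hM]
  have h : (!![2,1,1,1;1,1,1,1;1,0,1,1;1,0,0,1] : Matrix (Fin 4) (Fin 4) ℚ).charmatrix
      = !![X-C 2, -C 1, -C 1, -C 1; -C 1, X-C 1, -C 1, -C 1; -C 1, 0, X-C 1, -C 1; -C 1, 0, 0, X-C 1] := by
    ext i j
    fin_cases i <;> fin_cases j <;>
      simp [Matrix.charmatrix_apply, Matrix.one_apply, Matrix.vecHead, Matrix.vecTail]
  rw [Matrix.charpoly, h]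
  rw [Matrix.det_succ_row_zero]
  simp [Fin.sum_univ_succ, Matrix.det_succ_row_zero, Fin.succAbove, Fin.castSucc, Fin.castAdd,
    Fin.castLE, Fin.succ, map_ofNat, Matrix.vecHead, Matrix.vecTail]
  ring


set_option maxHeartbeats 800000 in
lemma roots_classify (lam t : ℝ) (hl1 : 3.6 ≤ lam) (hl2 : lam ≤ 3.65)
    (ht1 : 0.44 ≤ t) (ht2 : t ≤ 0.46)
    (hflam : lam^4 - 5*lam^3 + 6*lam^2 - 4*lam + 1 = 0)
    (hft : t^4 - 5*t^3 + 6*t^2 - 4*t + 1 = 0) :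
    ∀ z : ℂ, z^4 - 5*z^3 + 6*z^2 - 4*z + 1 = 0 → z = (lam:ℂ) ∨ ‖z‖ < 1 := by
  obtain ⟨P, hP⟩ : ∃ P : ℝ[X], P = X^4 - 5*X^3 + 6*X^2 - 4*X + 1 := ⟨_, rfl⟩
  have hPm : P.Monic := by rw [hP]; monicity!
  have hPd : P.natDegree = 4 := by rw [hP]; compute_degree!
  have hevalP : ∀ x : ℝ, P.eval x = x^4 - 5*x^3 + 6*x^2 - 4*x + 1 := by
    intro x; simp [hP]
  have hne : t ≠ lam := by intro h; rw [h] at ht2; linarith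
  have hrootlam : P.IsRoot lam := by rw [IsRoot, hevalP]; exact hflam
  obtain ⟨P1, hP1⟩ := dvd_iff_isRoot.mpr hrootlam
  have hroott : P1.IsRoot t := by
    have h0 : P.eval t = 0 := by rw [hevalP]; exact hft
    rw [hP1, eval_mul] at h0
    rcases mul_eq_zero.mp h0 with h | h
    · exfalso; apply hne; have := h; simp [eval_sub, eval_X, eval_C] at this; linarith [this]
    · exact h
  obtain ⟨Q, hQ⟩ := dvd_iff_isRoot.mpr hroott
  have hPfac : P = (X - C lam) * ((X - C t) * Q) := by rw [hP1, hQ]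
  have hQm : Q.Monic := ((monic_X_sub_C t).of_mul_monic_left
    ((monic_X_sub_C lam).of_mul_monic_left (hPfac ▸ hPm)))
  have hQd : Q.natDegree = 2 := by
    have h4 : P.natDegree = 1 + (1 + Q.natDegree) := by
      rw [hPfac, (monic_X_sub_C lam).natDegree_mul ((monic_X_sub_C t).mul hQm),
        (monic_X_sub_C t).natDegree_mul hQm]
      simp [natDegree_X_sub_C]
    rw [hPd] at h4; omega
  obtain ⟨v, hvdef⟩ : ∃ v, v = Q.eval 0 := ⟨_, rfl⟩
  obtain ⟨e, hedef⟩ : ∃ e, e = Q.eval 1 := ⟨_, rfl⟩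
  have hE0 : lam * t * v = 1 := by
    have h0 : P.eval 0 = 1 := by rw [hevalP]; norm_num
    rw [hPfac] at h0
    simp only [eval_mul, eval_sub, eval_X, eval_C] at h0
    rw [hvdef]; nlinarith [h0]
  have hE1 : (1 - lam) * (1 - t) * e = -1 := by
    have h0 : P.eval 1 = -1 := by rw [hevalP]; norm_num
    rw [hPfac] at h0
    simp only [eval_mul, eval_sub, eval_X, eval_C] at h0
    rw [hedef]; nlinarith [h0]
  obtain ⟨st, hstdef⟩ : ∃ st, st = lam * t := ⟨_, rfl⟩
  obtain ⟨su, hsudef⟩ : ∃ su, su = (1 - lam) * (1 - t) := ⟨_, rfl⟩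
  have hst1 : 1.584 ≤ st := by rw [hstdef]; nlinarith
  have hst2 : st ≤ 1.679 := by rw [hstdef]; nlinarith
  have hsu1 : -1.484 ≤ su := by rw [hsudef]; nlinarith
  have hsu2 : su ≤ -1.404 := by rw [hsudef]; nlinarith
  have hE0' : st * v = 1 := by rw [hstdef]; linarith [hE0]
  have hE1' : su * e = -1 := by rw [hsudef]; linarith [hE1]
  clear hE0 hE1 hflam hft hstdef hsudef
  have hstpos : (0:ℝ) ≤ st := by linarith
  have hvpos : 0 < v := by
    rcases lt_or_ge 0 v with h | h
    · exact h
    · exfalso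
      have := mul_nonpos_of_nonneg_of_nonpos hstpos h
      linarith
  have hv1 : 0.59 ≤ v := by
    have := mul_le_mul_of_nonneg_right hst2 hvpos.le
    linarith
  have hv2 : v ≤ 0.64 := by
    have := mul_le_mul_of_nonneg_right hst1 hvpos.le
    linarith
  have hepos : 0 < e := by
    rcases lt_or_ge 0 e with h | h
    · exact h
    · exfalso
      have : 0 ≤ su * e := by nlinarith
      linarith
  have he1 : 0.67 ≤ e := by
    have := mul_le_mul_of_nonneg_right hsu1 hepos.le
    linarith
  have he2 : e ≤ 0.72 := by
    have := mul_le_mul_of_nonneg_right hsu2 hepos.le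
    linarith
  -- complex part
  obtain ⟨Qc, hQc⟩ : ∃ Qc, Qc = Q.map (algebraMap ℝ ℂ) := ⟨_, rfl⟩
  have hQcm : Qc.Monic := by rw [hQc]; exact hQm.map _
  have hQcd : Qc.natDegree = 2 := by rw [hQc, hQm.natDegree_map, hQd]
  have hQcr : ∀ r : ℝ, Qc.eval ((r : ℝ) : ℂ) = ((Q.eval r : ℝ) : ℂ) := by
    intro r
    rw [hQc, eval_map, ← Complex.coe_algebraMap, eval₂_at_apply]
  have hkey : ∀ u : ℂ, u^4 - 5*u^3 + 6*u^2 - 4*u + 1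
      = (u - (lam:ℂ)) * ((u - (t:ℂ)) * Qc.eval u) := by
    intro u
    have hmap : P.map (algebraMap ℝ ℂ) = (X - C ((lam:ℝ):ℂ)) * ((X - C ((t:ℝ):ℂ)) * Qc) := by
      rw [hPfac]
      simp [Polynomial.map_mul, Polynomial.map_sub, Polynomial.map_X, Polynomial.map_C, hQc]
    have h2 := congrArg (eval u) hmap
    simp only [eval_mul, eval_sub, eval_X, eval_C] at h2
    rw [← h2, hP]
    simp [Polynomial.map_add, Polynomial.map_sub, Polynomial.map_mul, Polynomial.map_pow,
      Polynomial.map_X, Polynomial.map_ofNat, Polynomial.map_one]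
  intro z hz
  by_cases hzlam : z = (lam:ℂ)
  · exact Or.inl hzlam
  right
  by_cases hzt : z = (t:ℂ)
  · rw [hzt, Complex.norm_real, Real.norm_eq_abs, abs_of_pos (by linarith)]; linarith
  -- z is a root of Qc
  have hQcz : Qc.eval z = 0 := by
    have h0 := (hkey z).symm.trans hz
    rcases mul_eq_zero.mp h0 with h | h
    · exact absurd (sub_eq_zero.mp h) hzlam
    rcases mul_eq_zero.mp h with h | h
    · exact absurd (sub_eq_zero.mp h) hzt
    · exact h
  obtain ⟨L, hL⟩ := dvd_iff_isRoot.mpr hQcz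
  have hLm : L.Monic := (monic_X_sub_C z).of_mul_monic_left (hL ▸ hQcm)
  have hLd : L.natDegree = 1 := by
    have := hQcd
    rw [hL, (monic_X_sub_C z).natDegree_mul hLm, natDegree_X_sub_C] at this
    omega
  obtain ⟨w, hwdef⟩ : ∃ w : ℂ, w = -(L.coeff 0) := ⟨_, rfl⟩
  have hQcfac : Qc = (X - C z) * (X - C w) := by
    rw [hL, hLm.eq_X_add_C hLd, hwdef, map_neg, sub_neg_eq_add]
  have hzw0 : z * w = (v:ℂ) := by
    have h0 := hQcr 0
    rw [Complex.ofReal_zero, hQcfac] at h0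
    simp only [eval_mul, eval_sub, eval_X, eval_C, zero_sub, neg_mul_neg] at h0
    rw [← hvdef] at h0
    exact h0
  have hzw1 : (1 - z) * (1 - w) = (e:ℂ) := by
    have h0 := hQcr 1
    rw [Complex.ofReal_one, hQcfac] at h0
    simp only [eval_mul, eval_sub, eval_X, eval_C] at h0
    rw [← hedef] at h0
    exact h0
  by_cases him : z.im = 0
  · -- z real: contradiction
    exfalso
    obtain ⟨x, hxdef⟩ : ∃ x, x = z.re := ⟨_, rfl⟩
    have hzre : z = ((x : ℝ) : ℂ) := by
      rw [hxdef]; apply Complex.ext <;> simp [him]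
    have hx0 : x ≠ 0 := by
      intro h
      rw [hzre, h] at hzw0
      simp only [Complex.ofReal_zero, zero_mul] at hzw0
      have : v = 0 := by exact_mod_cast hzw0.symm
      linarith
    have hwim : w.im = 0 := by
      have h3 := congrArg Complex.im hzw0
      simp only [Complex.mul_im, Complex.ofReal_im, him, zero_mul, add_zero] at h3
      rw [hzre] at h3
      simp only [Complex.ofReal_re, Complex.ofReal_im, zero_mul, add_zero] at h3
      rcases mul_eq_zero.mp h3 with h | h
      · exact absurd h hx0
      · exact h
    obtain ⟨y, hydef⟩ : ∃ y, y = w.re := ⟨_, rfl⟩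
    have hxy : x * y = v := by
      have h1 := congrArg Complex.re hzw0
      rw [hzre] at h1
      simp only [Complex.mul_re, Complex.ofReal_re, Complex.ofReal_im, hwim, zero_mul,
        mul_zero, sub_zero] at h1
      rw [hydef]; exact h1
    have hxe : (1 - x) * (1 - y) = e := by
      have h2 := congrArg Complex.re hzw1
      rw [hzre] at h2
      simp only [Complex.mul_re, Complex.sub_re, Complex.sub_im, Complex.one_re, Complex.one_im,
        Complex.ofReal_re, Complex.ofReal_im, hwim, him, zero_sub, sub_zero, neg_zero,
        mul_zero, zero_mul] at h2
      rw [hydef]; exact h2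
    have hs : x + y = 1 + v - e := by nlinarith [hxy, hxe]
    nlinarith [sq_nonneg (x - y), hxy, hs, hv1, hv2, he1, he2]
  · -- z nonreal
    have hzc : (starRingEnd ℂ z)^4 - 5*(starRingEnd ℂ z)^3 + 6*(starRingEnd ℂ z)^2
        - 4*(starRingEnd ℂ z) + 1 = 0 := by
      have := congrArg (starRingEnd ℂ) hz
      simpa [map_sub, map_add, map_mul, map_pow, map_ofNat] using this
    set c := starRingEnd ℂ z with hcdef
    have hcim : c.im = -z.im := by simp [hcdef]
    have hclam : c ≠ (lam:ℂ) := by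
      intro h
      have := congrArg Complex.im h
      rw [hcim] at this
      simp at this
      exact him (by linarith [this])
    have hct : c ≠ (t:ℂ) := by
      intro h
      have := congrArg Complex.im h
      rw [hcim] at this
      simp at this
      exact him (by linarith [this])
    have hQcc : Qc.eval c = 0 := by
      have h0 := (hkey c).symm.trans hzc
      rcases mul_eq_zero.mp h0 with h | h
      · exact absurd (sub_eq_zero.mp h) hclam
      rcases mul_eq_zero.mp h with h | h
      · exact absurd (sub_eq_zero.mp h) hct
      · exact h
    rw [hQcfac] at hQcc
    simp only [eval_mul, eval_sub, eval_X, eval_C] at hQcc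
    have hcz : c ≠ z := by
      intro h
      have := congrArg Complex.im h
      rw [hcim] at this
      exact him (by linarith [this])
    have hwc : w = c := by
      rcases mul_eq_zero.mp hQcc with h | h
      · exact absurd (sub_eq_zero.mp h) hcz
      · exact (sub_eq_zero.mp h).symm
    have hnorm : Complex.normSq z = v := by
      have : z * c = (v:ℂ) := by rw [← hwc]; exact hzw0
      rw [hcdef, Complex.mul_conj] at this
      exact_mod_cast this
    have habs : ‖z‖ ^ 2 = v := by rw [Complex.sq_norm]; exact hnorm
    nlinarith [norm_nonneg z, habs, hv2]

/-- `τ = β₁₂ ∘ β₂₃ ∘ β₃₄ ∘ β₄₁` satisfies `τ(1) = 12341`, `τ(2) = 12`,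
`τ(3) = 123`, `τ(4) = 1234`, and the characteristic polynomial of its incidence matrix is
the minimal polynomial of a Pisot number (a real algebraic integer `λ > 1` all of whose
other conjugates lie in the open unit disk). -/
theorem stmt_19 :
    brunτ 0 = [0, 1, 2, 3, 0] ∧ brunτ 1 = [0, 1] ∧ brunτ 2 = [0, 1, 2] ∧
    brunτ 3 = [0, 1, 2, 3] ∧
    ∃ lam : ℝ, 1 < lam ∧ IsIntegral ℤ lam ∧
      minpoly ℚ lam = (Matrix.of fun i j : Fin 4 => ((brunτ j).count i : ℚ)).charpoly ∧
      ∀ z : ℂ, Polynomial.aeval z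
          ((Matrix.of fun i j : Fin 4 => ((brunτ j).count i : ℚ)).charpoly) = 0 →
        z = (lam : ℂ) ∨ ‖z‖ < 1 := by
  refine ⟨by decide, by decide, by decide, by decide, ?_⟩
  -- get the Pisot root
  obtain ⟨lam, hlmem, hflam⟩ : ∃ lam ∈ Set.Icc (3.6:ℝ) 3.65,
      lam^4 - 5*lam^3 + 6*lam^2 - 4*lam + 1 = 0 := by
    have hc : ContinuousOn (fun x : ℝ => x^4 - 5*x^3 + 6*x^2 - 4*x + 1) (Set.Icc 3.6 3.65) := by
      fun_prop
    have h0 : (0:ℝ) ∈ Set.Icc ((3.6:ℝ)^4 - 5*3.6^3+6*3.6^2-4*3.6+1)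
        ((3.65:ℝ)^4 - 5*3.65^3+6*3.65^2-4*3.65+1) := by
      constructor <;> norm_num
    obtain ⟨lam, hmem, heq⟩ := intermediate_value_Icc (by norm_num : (3.6:ℝ) ≤ 3.65) hc h0
    exact ⟨lam, hmem, heq⟩
  obtain ⟨t, htmem, hft⟩ : ∃ t ∈ Set.Icc (0.44:ℝ) 0.46,
      t^4 - 5*t^3 + 6*t^2 - 4*t + 1 = 0 := by
    have hc : ContinuousOn (fun x : ℝ => x^4 - 5*x^3 + 6*x^2 - 4*x + 1) (Set.Icc 0.44 0.46) := by
      fun_prop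
    have h0 : (0:ℝ) ∈ Set.Icc ((0.46:ℝ)^4 - 5*0.46^3+6*0.46^2-4*0.46+1)
        ((0.44:ℝ)^4 - 5*0.44^3+6*0.44^2-4*0.44+1) := by
      constructor <;> norm_num
    obtain ⟨t, hmem, heq⟩ := intermediate_value_Icc' (by norm_num : (0.44:ℝ) ≤ 0.46) hc h0
    exact ⟨t, hmem, heq⟩
  obtain ⟨hl1, hl2⟩ := hlmem
  obtain ⟨ht1, ht2⟩ := htmem
  refine ⟨lam, by linarith, ?_, ?_, ?_⟩
  · -- integral over ℤ
    refine ⟨qZ, qZ_monic, ?_⟩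
    rw [qZ]
    simp only [eval₂_add, eval₂_mul, eval₂_pow, eval₂_X, eval₂_C, eval₂_one, map_add, map_mul,
      map_pow, map_one, aeval_X, aeval_C, algebraMap_int_eq, Int.coe_castRingHom]
    push_cast
    linarith [hflam]
  · -- minpoly
    rw [brun_charpoly]
    refine (minpoly.eq_of_irreducible_of_monic pQ_irred ?_ (by monicity!)).symm
    simp only [map_add, map_sub, map_mul, map_pow, map_one, aeval_X, map_ofNat]
    exact_mod_cast hflam
  · -- conjugates
    intro z hz
    rw [brun_charpoly] at hz
    simp only [map_add, map_sub, map_mul, map_pow, map_one, aeval_X, map_ofNat] at hz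
    exact roots_classify lam t hl1 hl2 ht1 ht2 hflam hft z hz

end
end
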